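/- arXiv:1203.3079 — 5 statements merged into one kernel-verified Lean document; each statement's English description precedes it below -/
import Mathlib

section
/- Let a : ℕ × ℕ → ℝ satisfy a(n,k) ≥ 0 for all n, k, let ρ > 0, α > 0, c₁ > 0 and u₀ > 1. Assume (i) the double sum Σ_{n,k} a(n,k) ρ^n u₀^k converges, and (ii) there is N such that Σ_k a(n,k) ≥ c₁ n^{−α} ρ^{−n} for all n ≥ N. Then there exists c > 0 such that for every sufficiently small ε > 0 there is n₀(ε) with: for all n ≥ n₀(ε), (Σ_{k > n^ε} a(n,k)) / (Σ_k a(n,k)) ≤ exp(−n^{cε}). -/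
open Real Filter Topology

lemma aux_asymp (ε L αc lu : ℝ) (hε : 0 < ε) (hlu : 0 < lu) :
    ∀ᶠ x : ℝ in atTop, L + αc * Real.log x + x ^ (ε/2) ≤ lu * x ^ ε := by
  have h0 : Tendsto (fun x : ℝ => (L + αc * Real.log x + x ^ (ε/2)) / x ^ ε) atTop (𝓝 0) := by
    have h1 : Tendsto (fun x : ℝ => L * x ^ (-ε)) atTop (𝓝 0) := by
      simpa using (tendsto_rpow_neg_atTop hε).const_mul L
    have h2 : Tendsto (fun x : ℝ => αc * (Real.log x / x ^ ε)) atTop (𝓝 0) := by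
      simpa using ((isLittleO_log_rpow_atTop hε).tendsto_div_nhds_zero).const_mul αc
    have h3 : Tendsto (fun x : ℝ => x ^ (-(ε/2))) atTop (𝓝 0) :=
      tendsto_rpow_neg_atTop (by linarith)
    have h4 := (h1.add h2).add h3
    simp only [add_zero] at h4
    refine h4.congr' ?_
    filter_upwards [eventually_gt_atTop (0:ℝ)] with x hx
    have he : x ^ (ε/2) / x ^ ε = x ^ (-(ε/2)) := by
      rw [← Real.rpow_sub hx]; ring_nf
    rw [add_div, add_div, he, mul_div_assoc, Real.rpow_neg hx.le, div_eq_mul_inv L]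
  have h5 := h0.eventually_lt_const hlu
  filter_upwards [h5, eventually_gt_atTop (0:ℝ)] with x hx hx0
  have hxε : (0:ℝ) < x ^ ε := Real.rpow_pos_of_pos hx0 ε
  exact le_of_lt ((div_lt_iff₀ hxε).1 hx)

/-- Lemma 2.1 of the paper (exponential-tail criterion), stated for the
coefficient array `a (n, k)` of the bivariate generating function
`A(z,u) = ∑ a(n,k) zⁿ uᵏ` of a weighted combinatorial class:
if `A(ρ, u₀)` converges for some `u₀ > 1` and the size-`n` coefficients of
`A(z,1)` are `Ω(n^{-α} ρ^{-n})`, then the probability under the weighted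
distribution in size `n` that the parameter exceeds `n^ε` is at most
`exp(-n^{cε})` for large `n`. -/
theorem tail_exponential_rate
    (a : ℕ × ℕ → ℝ) (ha : ∀ p, 0 ≤ a p)
    (ρ α c₁ u₀ : ℝ) (hρ : 0 < ρ) (hα : 0 < α) (hc₁ : 0 < c₁) (hu₀ : 1 < u₀)
    (hsum : Summable (fun p : ℕ × ℕ => a p * ρ ^ p.1 * u₀ ^ p.2))
    (N : ℕ)
    (hlow : ∀ n : ℕ, N ≤ n → c₁ * (n : ℝ) ^ (-α) * ρ ^ (-(n : ℝ)) ≤ ∑' k, a (n, k)) :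
    ∃ c > (0 : ℝ), ∃ ε₀ > (0 : ℝ), ∀ ε : ℝ, 0 < ε → ε < ε₀ →
      ∃ n₀ : ℕ, ∀ n : ℕ, n₀ ≤ n →
        (∑' k : ℕ, if (n : ℝ) ^ ε < (k : ℝ) then a (n, k) else 0) / (∑' k : ℕ, a (n, k))
          ≤ Real.exp (-(n : ℝ) ^ (c * ε)) := by
  have hu₀0 : (0:ℝ) < u₀ := lt_trans one_pos hu₀
  set T : ℝ := ∑' p : ℕ × ℕ, a p * ρ ^ p.1 * u₀ ^ p.2 with hT
  have hT0 : 0 ≤ T := tsum_nonneg fun p => mul_nonneg (mul_nonneg (ha p) (by positivity)) (by positivity)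
  set T' : ℝ := max T 1 with hT'
  have hT'pos : 0 < T' := lt_of_lt_of_le one_pos (le_max_right _ _)
  have hTT' : T ≤ T' := le_max_left _ _
  refine ⟨1/2, by norm_num, 1, one_pos, fun ε hε hε1 => ?_⟩
  -- asymptotic inequality
  have hlu : 0 < Real.log u₀ := Real.log_pos hu₀
  have hasymp := aux_asymp ε (Real.log (T' / c₁)) α (Real.log u₀) hε hlu
  have hnat : ∀ᶠ n : ℕ in atTop,
      Real.log (T' / c₁) + α * Real.log (n : ℝ) + (n:ℝ) ^ (ε/2)
        ≤ Real.log u₀ * (n:ℝ) ^ ε :=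
    tendsto_natCast_atTop_atTop.eventually hasymp
  have hcomb : ∀ᶠ n : ℕ in atTop,
      (Real.log (T' / c₁) + α * Real.log (n : ℝ) + (n:ℝ) ^ (ε/2)
        ≤ Real.log u₀ * (n:ℝ) ^ ε) ∧ N ≤ n ∧ 1 ≤ n :=
    hnat.and ((eventually_ge_atTop N).and (eventually_ge_atTop 1))
  obtain ⟨n₀, hn₀⟩ := eventually_atTop.1 hcomb
  refine ⟨n₀, fun n hn => ?_⟩
  obtain ⟨hineq, hnN, hn1⟩ := hn₀ n hn
  have hnpos : (0:ℝ) < (n:ℝ) := by exact_mod_cast hn1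
  -- summability facts for the fiber n
  have hg : Summable (fun k : ℕ => a (n, k) * ρ ^ n * u₀ ^ k) := by
    have := hsum.comp_injective (i := fun k : ℕ => ((n, k) : ℕ × ℕ))
      (fun k₁ k₂ h => (Prod.ext_iff.1 h).2)
    exact this
  have hgT : (∑' k : ℕ, a (n, k) * ρ ^ n * u₀ ^ k) ≤ T := by
    refine Summable.tsum_le_tsum_of_inj (fun k : ℕ => ((n, k) : ℕ × ℕ))
      (fun k₁ k₂ h => (Prod.ext_iff.1 h).2) (fun p _ => mul_nonneg (mul_nonneg (ha p) (by positivity)) (by positivity))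
      (fun k => le_rfl) hg hsum
  have hDsum : Summable (fun k : ℕ => a (n, k)) := by
    refine Summable.of_nonneg_of_le (fun k => ha _)
      (fun k => ?_) (hg.mul_right (ρ ^ n)⁻¹)
    have h1 : (1:ℝ) ≤ u₀ ^ k := one_le_pow₀ hu₀.le
    have hρn : (0:ℝ) < ρ ^ n := pow_pos hρ n
    have heq2 : a (n, k) * ρ ^ n * u₀ ^ k * (ρ ^ n)⁻¹ = a (n, k) * u₀ ^ k := by
      field_simp
      try ring
    rw [heq2]
    nlinarith [ha (n, k)]
  set D : ℝ := ∑' k : ℕ, a (n, k) with hD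
  have hDlow : c₁ * (n:ℝ) ^ (-α) * ρ ^ (-(n:ℝ)) ≤ D := hlow n hnN
  have hlowpos : (0:ℝ) < c₁ * (n:ℝ) ^ (-α) * ρ ^ (-(n:ℝ)) := by positivity
  -- numerator bound
  set e : ℝ := (n:ℝ) ^ ε with he
  set Num : ℝ := ∑' k : ℕ, if (n:ℝ) ^ ε < (k:ℝ) then a (n, k) else 0 with hNum
  have hNumsum : Summable (fun k : ℕ => if (n:ℝ) ^ ε < (k:ℝ) then a (n, k) else 0) := by
    refine Summable.of_nonneg_of_le (fun k => ?_) (fun k => ?_) hDsum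
    · split <;> simp [ha]
    · split <;> simp [ha (n, k)]
  have hNum0 : 0 ≤ Num := tsum_nonneg fun k => by split <;> simp [ha]
  have hρnr : ρ ^ (-(n:ℝ)) = (ρ ^ n)⁻¹ := by
    rw [Real.rpow_neg hρ.le, Real.rpow_natCast]
  have hρn : (0:ℝ) < ρ ^ n := pow_pos hρ n
  have hNumle : Num ≤ u₀ ^ (-e) * ρ ^ (-(n:ℝ)) * T := by
    have hstep : Num ≤ ∑' k : ℕ, u₀ ^ (-e) * ρ ^ (-(n:ℝ)) * (a (n, k) * ρ ^ n * u₀ ^ k) := by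
      refine Summable.tsum_le_tsum (fun k => ?_) hNumsum ((hg.mul_left _))
      by_cases hk : (n:ℝ) ^ ε < (k:ℝ)
      · simp only [hk, if_true]
        have hfac : (1:ℝ) ≤ u₀ ^ (-e) * ρ ^ (-(n:ℝ)) * (ρ ^ n * u₀ ^ k) := by
          rw [hρnr]
          have huk : (u₀ : ℝ) ^ k = u₀ ^ (k:ℝ) := (Real.rpow_natCast u₀ k).symm
          rw [huk]
          have : u₀ ^ (-e) * (ρ ^ n)⁻¹ * (ρ ^ n * u₀ ^ (k:ℝ))
              = u₀ ^ (-e) * u₀ ^ (k:ℝ) := by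
            field_simp
            try ring
          rw [this, ← Real.rpow_add hu₀0]
          have : (0:ℝ) ≤ -e + k := by rw [he]; linarith [hk.le]
          calc (1:ℝ) = u₀ ^ (0:ℝ) := (Real.rpow_zero u₀).symm
            _ ≤ u₀ ^ (-e + (k:ℝ)) := Real.rpow_le_rpow_left_iff hu₀ |>.2 (by linarith)
        calc a (n, k) = a (n, k) * 1 := (mul_one _).symm
          _ ≤ a (n, k) * (u₀ ^ (-e) * ρ ^ (-(n:ℝ)) * (ρ ^ n * u₀ ^ k)) :=
              mul_le_mul_of_nonneg_left hfac (ha _)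
          _ = u₀ ^ (-e) * ρ ^ (-(n:ℝ)) * (a (n, k) * ρ ^ n * u₀ ^ k) := by ring
      · simp only [hk, if_false]
        exact mul_nonneg (by positivity)
          (mul_nonneg (mul_nonneg (ha _) (by positivity)) (by positivity))
    calc Num ≤ _ := hstep
      _ = u₀ ^ (-e) * ρ ^ (-(n:ℝ)) * ∑' k : ℕ, a (n, k) * ρ ^ n * u₀ ^ k := tsum_mul_left
      _ ≤ u₀ ^ (-e) * ρ ^ (-(n:ℝ)) * T := by
          refine mul_le_mul_of_nonneg_left hgT (by positivity)
  -- main chain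
  have hnα : (0:ℝ) < (n:ℝ) ^ α := Real.rpow_pos_of_pos hnpos α
  have hstep1 : Num / D ≤ Num / (c₁ * (n:ℝ) ^ (-α) * ρ ^ (-(n:ℝ))) :=
    div_le_div_of_nonneg_left hNum0 hlowpos hDlow
  have hstep2 : Num / (c₁ * (n:ℝ) ^ (-α) * ρ ^ (-(n:ℝ)))
      ≤ (u₀ ^ (-e) * ρ ^ (-(n:ℝ)) * T) / (c₁ * (n:ℝ) ^ (-α) * ρ ^ (-(n:ℝ))) :=
    (div_le_div_iff_of_pos_right hlowpos).2 hNumle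
  have heq : (u₀ ^ (-e) * ρ ^ (-(n:ℝ)) * T) / (c₁ * (n:ℝ) ^ (-α) * ρ ^ (-(n:ℝ)))
      = T / c₁ * (n:ℝ) ^ α * u₀ ^ (-e) := by
    rw [Real.rpow_neg hnpos.le, hρnr]
    have hnα' : ((n:ℝ) ^ α) ≠ 0 := hnα.ne'
    field_simp
    try ring
  have hstep3 : T / c₁ * (n:ℝ) ^ α * u₀ ^ (-e) ≤ T' / c₁ * (n:ℝ) ^ α * u₀ ^ (-e) := by
    gcongr
  have hstep4 : T' / c₁ * (n:ℝ) ^ α * u₀ ^ (-e) ≤ Real.exp (-(n:ℝ) ^ (1/2 * ε)) := by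
    have hT'c : (0:ℝ) < T' / c₁ := by positivity
    have e1 : T' / c₁ = Real.exp (Real.log (T' / c₁)) := (Real.exp_log hT'c).symm
    have e2 : (n:ℝ) ^ α = Real.exp (Real.log (n:ℝ) * α) := Real.rpow_def_of_pos hnpos α
    have e3 : u₀ ^ (-e) = Real.exp (Real.log u₀ * (-e)) := Real.rpow_def_of_pos hu₀0 (-e)
    rw [e1, e2, e3, ← Real.exp_add, ← Real.exp_add, Real.exp_le_exp]
    have hhalf : (1/2 : ℝ) * ε = ε / 2 := by ring
    rw [hhalf]
    rw [he] at *
    linarith [hineq]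
  calc Num / D ≤ _ := hstep1
    _ ≤ _ := hstep2
    _ = T / c₁ * (n:ℝ) ^ α * u₀ ^ (-e) := heq
    _ ≤ T' / c₁ * (n:ℝ) ^ α * u₀ ^ (-e) := hstep3
    _ ≤ Real.exp (-(n:ℝ) ^ (1/2 * ε)) := hstep4
end

section
/- Fix x > 0. Let T : [0, 1/4] → ℝ be the Catalan generating function, i.e. the unique continuous function with T(0) = 1 satisfying T(w) = 1/(1 − w·T(w)) for all w ∈ [0, 1/4] (explicitly T(w) = (1 − √(1 − 4w))/(2w) for w ≠ 0). Let f(z) = Σ_{n≥1} f_n z^n and g(z) = Σ_{n≥1} g_n z^n be power series with nonnegative coefficients and zero constant term, let ρ ∈ (0, ∞) be the radius of convergence of f, and suppose that for every z ∈ (0, ρ): f(z) < 1/2, g(z) < 1/2, z/(1 − 2f(z))² ≤ 1/4, x·z/(1 − 2g(z))² ≤ 1/4, and the system f(z) = (x·z/(1 − 2g(z))) · T( x·z/(1 − 2g(z))² ) and g(z) = (z/(1 − 2f(z))) · T( z/(1 − 2f(z))² ) holds. Then, setting τ = lim_{z → ρ⁻} f(z) and σ = lim_{z → ρ⁻} g(z)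 (these limits exist by monotonicity), one has: τ < 1/2, σ < 1/2, ρ/(1 − 2τ)² < 1/4, and x·ρ/(1 − 2σ)² < 1/4. -/
open Real Filter

section BicoloredTreeAux
open Finset

set_option maxHeartbeats 1000000

private lemma coeff_head (c : ℕ → ℝ) (r : ℝ) (hr : 0 < r)
    (hs : Summable (fun n => |c n| * r ^ n))
    (h0 : ∀ z : ℝ, 0 < z → z < r → (∑' n : ℕ, c n * z ^ n) = 0) : c 0 = 0 := by
  have hshift : Summable (fun n => |c (n + 1)| * r ^ (n + 1)) := (summable_nat_add_iff 1).2 hs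
  have hK : Summable (fun n => |c (n + 1)| * r ^ n) := by
    have := hshift.mul_left r⁻¹
    refine this.congr fun n => ?_
    field_simp [pow_succ]
    ring
  set K := ∑' n, |c (n + 1)| * r ^ n with hKdef
  have hK0 : 0 ≤ K := tsum_nonneg fun n => by positivity
  have hbound : ∀ z : ℝ, 0 < z → z < r → |c 0| ≤ z * K := by
    intro z hz1 hz2
    have habs : Summable (fun n => |c n| * z ^ n) := by
      refine hs.of_nonneg_of_le (fun n => by positivity) (fun n => ?_)
      exact mul_le_mul_of_nonneg_left (pow_le_pow_left₀ hz1.le hz2.le n) (abs_nonneg _)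
    have hsum : Summable (fun n => c n * z ^ n) := by
      refine Summable.of_norm (habs.congr fun n => ?_)
      rw [norm_mul, Real.norm_eq_abs, Real.norm_eq_abs,
        abs_of_nonneg (by positivity : (0:ℝ) ≤ z ^ n)]
    have hsplit := hsum.tsum_eq_zero_add
    rw [h0 z hz1 hz2] at hsplit
    have h1 : c 0 = -∑' n, c (n + 1) * z ^ (n + 1) := by
      have := hsplit.symm
      rw [pow_zero, mul_one] at this
      linarith
    have habs' : Summable (fun n => ‖c (n + 1) * z ^ (n + 1)‖) := by
      refine ((summable_nat_add_iff 1).2 habs).congr fun n => ?_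
      rw [norm_mul, Real.norm_eq_abs, Real.norm_eq_abs, abs_of_nonneg (by positivity : (0:ℝ) ≤ z ^ (n+1))]
    calc |c 0| = ‖∑' n, c (n + 1) * z ^ (n + 1)‖ := by
          rw [h1, ← Real.norm_eq_abs, norm_neg]
      _ ≤ ∑' n, ‖c (n + 1) * z ^ (n + 1)‖ := norm_tsum_le_tsum_norm habs'
      _ ≤ ∑' n, z * (|c (n + 1)| * r ^ n) := by
          refine Summable.tsum_le_tsum (fun n => ?_) habs' (hK.mul_left z)
          rw [norm_mul, Real.norm_eq_abs, Real.norm_eq_abs,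
            abs_of_nonneg (by positivity : (0:ℝ) ≤ z ^ (n+1))]
          have : z ^ (n + 1) ≤ z * r ^ n := by
            rw [pow_succ']
            exact mul_le_mul_of_nonneg_left (pow_le_pow_left₀ hz1.le hz2.le n) hz1.le
          calc |c (n+1)| * z ^ (n+1) ≤ |c (n+1)| * (z * r ^ n) :=
                mul_le_mul_of_nonneg_left this (abs_nonneg _)
            _ = z * (|c (n+1)| * r ^ n) := by ring
      _ = z * K := by rw [tsum_mul_left]
  by_contra hc
  have h1 : 0 < |c 0| := abs_pos.2 hc
  set z := min (r / 2) (|c 0| / (2 * (K + 1))) with hzdef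
  have hz1 : 0 < z := lt_min (by linarith) (by positivity)
  have hz2 : z < r := (min_le_left _ _).trans_lt (by linarith)
  have hb := hbound z hz1 hz2
  have hz3 : z * (2 * (K + 1)) ≤ |c 0| := by
    have := min_le_right (r / 2) (|c 0| / (2 * (K + 1)))
    rw [← hzdef] at this
    calc z * (2 * (K + 1)) ≤ (|c 0| / (2 * (K + 1))) * (2 * (K + 1)) := by
          exact mul_le_mul_of_nonneg_right this (by positivity)
      _ = |c 0| := by field_simp
  nlinarith [mul_pos hz1 (show (0:ℝ) < K + 2 by linarith)]

private lemma coeff_zero (δ : ℝ) (hδ : 0 < δ) :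
    ∀ (n : ℕ) (c : ℕ → ℝ),
      (∀ z : ℝ, 0 < z → z < δ → Summable (fun n => |c n| * z ^ n)) →
      (∀ z : ℝ, 0 < z → z < δ → (∑' n : ℕ, c n * z ^ n) = 0) → c n = 0 := by
  intro n
  induction n with
  | zero =>
    intro c hs h0
    exact coeff_head c (δ / 2) (by linarith) (hs (δ/2) (by linarith) (by linarith))
      (fun z hz1 hz2 => h0 z hz1 (by linarith))
  | succ n ih =>
    intro c hs h0
    have hc0 : c 0 = 0 := coeff_head c (δ / 2) (by linarith)
      (hs (δ/2) (by linarith) (by linarith)) (fun z hz1 hz2 => h0 z hz1 (by linarith))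
    refine ih (fun m => c (m + 1)) (fun z hz1 hz2 => ?_) (fun z hz1 hz2 => ?_)
    · have h := (summable_nat_add_iff 1).2 (hs z hz1 hz2)
      refine (h.mul_left z⁻¹).congr fun m => ?_
      field_simp [pow_succ]
      ring
    · have habs := hs z hz1 hz2
      have hsum : Summable (fun m => c m * z ^ m) := by
        refine Summable.of_norm (habs.congr fun m => ?_)
        rw [norm_mul, Real.norm_eq_abs, Real.norm_eq_abs,
          abs_of_nonneg (by positivity : (0:ℝ) ≤ z ^ m)]
      have hsplit := hsum.tsum_eq_zero_add
      rw [h0 z hz1 hz2, hc0, zero_mul, zero_add] at hsplit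
      have hfac : ∀ m : ℕ, c (m + 1) * z ^ (m + 1) = z * (c (m + 1) * z ^ m) := by
        intro m; rw [pow_succ]; ring
      rw [tsum_congr hfac, tsum_mul_left] at hsplit
      rcases mul_eq_zero.1 hsplit.symm with h | h
      · exact absurd h hz1.ne'
      · exact h


-- Cauchy product for nonneg series
private lemma cauchy_conv (u v : ℕ → ℝ) (hu : ∀ n, 0 ≤ u n) (hv : ∀ n, 0 ≤ v n)
    (z : ℝ) (hz : 0 ≤ z)
    (hsu : Summable fun n => u n * z ^ n) (hsv : Summable fun n => v n * z ^ n) :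
    Summable (fun n => (∑ k ∈ Finset.range (n+1), u k * v (n-k)) * z ^ n) ∧
    (∑' n, u n * z ^ n) * (∑' n, v n * z ^ n)
      = ∑' n, (∑ k ∈ Finset.range (n+1), u k * v (n-k)) * z ^ n := by
  set F := fun n => u n * z ^ n with hF
  set G := fun n => v n * z ^ n with hG
  have hnF : Summable fun n => ‖F n‖ := by
    refine hsu.congr fun n => ?_
    rw [Real.norm_eq_abs, abs_of_nonneg (mul_nonneg (hu n) (pow_nonneg hz n))]
  have hnG : Summable fun n => ‖G n‖ := by
    refine hsv.congr fun n => ?_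
    rw [Real.norm_eq_abs, abs_of_nonneg (mul_nonneg (hv n) (pow_nonneg hz n))]
  have hkey : ∀ n : ℕ, ∑ k ∈ Finset.range (n+1), F k * G (n-k)
      = (∑ k ∈ Finset.range (n+1), u k * v (n-k)) * z ^ n := by
    intro n
    rw [Finset.sum_mul]
    refine Finset.sum_congr rfl fun k hk => ?_
    have hkn : k ≤ n := Nat.lt_succ_iff.1 (Finset.mem_range.1 hk)
    have : z ^ k * z ^ (n - k) = z ^ n := by
      rw [← pow_add, Nat.add_sub_cancel' hkn]
    simp only [hF, hG]
    rw [show u k * z ^ k * (v (n-k) * z ^ (n-k)) = u k * v (n-k) * (z ^ k * z ^ (n-k)) by ring,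
      this]
  constructor
  · have := summable_norm_sum_mul_range_of_summable_norm hnF hnG
    refine this.of_norm.congr fun n => ?_
    exact hkey n
  · have := tsum_mul_tsum_eq_tsum_sum_range_of_summable_norm hnF hnG
    rw [this]
    exact tsum_congr hkey

-- partial sums of convolution bounded by product of partial sums
private lemma conv_partial_le (u v : ℕ → ℝ) (hu : ∀ n, 0 ≤ u n) (hv : ∀ n, 0 ≤ v n)
    (hu0 : u 0 = 0) (hv0 : v 0 = 0) (z : ℝ) (hz : 0 ≤ z) (N : ℕ) :
    ∑ n ∈ Finset.range (N+1), (∑ k ∈ Finset.range (n+1), u k * v (n-k)) * z ^ n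
      ≤ (∑ k ∈ Finset.range N, u k * z ^ k) * (∑ j ∈ Finset.range N, v j * z ^ j) := by
  have hterm : ∀ p : ℕ × ℕ, 0 ≤ (u p.1 * z ^ p.1) * (v p.2 * z ^ p.2) := by
    intro p; exact mul_nonneg (mul_nonneg (hu p.1) (pow_nonneg hz p.1))
      (mul_nonneg (hv p.2) (pow_nonneg hz p.2))
  -- rewrite LHS as sum over pairs
  have hL : ∑ n ∈ Finset.range (N+1), (∑ k ∈ Finset.range (n+1), u k * v (n-k)) * z ^ n
      = ∑ p ∈ (Finset.range (N+1) ×ˢ Finset.range (N+1)).filter (fun p => p.1 + p.2 ≤ N),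
          (u p.1 * z ^ p.1) * (v p.2 * z ^ p.2) := by
    have hL1 : ∀ n ∈ Finset.range (N+1),
        (∑ k ∈ Finset.range (n+1), u k * v (n-k)) * z ^ n
          = ∑ k ∈ Finset.range (n+1), (u k * z ^ k) * (v (n-k) * z ^ (n-k)) := by
      intro n hn
      rw [Finset.sum_mul]
      refine Finset.sum_congr rfl fun k hk => ?_
      have hkn : k ≤ n := Nat.lt_succ_iff.1 (Finset.mem_range.1 hk)
      have hzz : z ^ k * z ^ (n - k) = z ^ n := by
        rw [← pow_add, Nat.add_sub_cancel' hkn]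
      rw [← hzz]; ring
    rw [Finset.sum_congr rfl hL1, Finset.sum_sigma']
    refine Finset.sum_nbij' (fun p => (p.2, p.1 - p.2)) (fun p => ⟨p.1 + p.2, p.1⟩)
      ?_ ?_ ?_ ?_ ?_
    · rintro ⟨n, k⟩ h
      simp only [Finset.mem_sigma, Finset.mem_range] at h
      simp only [Finset.mem_filter, Finset.mem_product, Finset.mem_range]
      have hkn : k ≤ n := Nat.lt_succ_iff.1 h.2
      have hnN : n ≤ N := Nat.lt_succ_iff.1 h.1
      exact ⟨⟨lt_of_le_of_lt (hkn.trans hnN) (Nat.lt_succ_self N),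
        lt_of_le_of_lt ((Nat.sub_le n k).trans hnN) (Nat.lt_succ_self N)⟩,
        by rw [Nat.add_sub_cancel' hkn]; exact hnN⟩
    · rintro ⟨k, j⟩ h
      simp only [Finset.mem_filter, Finset.mem_product, Finset.mem_range] at h
      simp only [Finset.mem_sigma, Finset.mem_range]
      exact ⟨Nat.lt_succ_of_le h.2, Nat.lt_succ_of_le (Nat.le_add_right _ _)⟩
    · rintro ⟨n, k⟩ h
      simp only [Finset.mem_sigma, Finset.mem_range] at h
      have hkn : k ≤ n := Nat.lt_succ_iff.1 h.2
      simp [Nat.add_sub_cancel' hkn]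
    · rintro ⟨k, j⟩ h
      simp [Nat.add_sub_cancel_left]
    · rintro ⟨n, k⟩ h
      rfl
  rw [hL]
  -- drop the terms with a zero factor, land inside range N ×ˢ range N
  set W := (Finset.range (N+1) ×ˢ Finset.range (N+1)).filter (fun p => p.1 + p.2 ≤ N) with hW
  set W' := W.filter (fun p => 1 ≤ p.1 ∧ 1 ≤ p.2) with hW'
  have h1 : ∑ p ∈ W, (u p.1 * z ^ p.1) * (v p.2 * z ^ p.2)
      = ∑ p ∈ W', (u p.1 * z ^ p.1) * (v p.2 * z ^ p.2) := by
    refine (Finset.sum_subset (Finset.filter_subset _ _) ?_).symm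
    intro p hp hp'
    have hpz : p.1 = 0 ∨ p.2 = 0 := by
      by_contra hcon
      push_neg at hcon
      exact hp' (Finset.mem_filter.2 ⟨hp,
        Nat.one_le_iff_ne_zero.2 hcon.1, Nat.one_le_iff_ne_zero.2 hcon.2⟩)
    rcases hpz with h | h
    · rw [h, hu0]; ring
    · rw [h, hv0]; ring
  rw [h1, Finset.sum_mul_sum]
  have h2 : W' ⊆ Finset.range N ×ˢ Finset.range N := by
    intro p hp
    simp only [hW', hW, Finset.mem_filter, Finset.mem_product, Finset.mem_range] at hp
    obtain ⟨⟨_, hle⟩, h1p, h2p⟩ := hp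
    simp only [Finset.mem_product, Finset.mem_range]
    omega
  calc ∑ p ∈ W', (u p.1 * z ^ p.1) * (v p.2 * z ^ p.2)
      ≤ ∑ p ∈ Finset.range N ×ˢ Finset.range N, (u p.1 * z ^ p.1) * (v p.2 * z ^ p.2) :=
        Finset.sum_le_sum_of_subset_of_nonneg h2 (fun p _ _ => hterm p)
    _ = ∑ i ∈ Finset.range N, ∑ j ∈ Finset.range N, (u i * z ^ i) * (v j * z ^ j) := by
        rw [Finset.sum_product]


private lemma quad_id (T : ℝ → ℝ)
    (hTeq : ∀ w ∈ Set.Icc (0:ℝ) (1/4), T w = 1 / (1 - w * T w))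
    (a b y : ℝ) (hy : 0 < y) (ha : a < 1/2) (h3 : y / (1-2*a)^2 ≤ 1/4)
    (h6 : b = (y / (1-2*a)) * T (y / (1-2*a)^2)) : b = y + 2*a*b + b^2 := by
  have hA : (0:ℝ) < 1 - 2*a := by linarith
  have hA' : (1 - 2*a) ≠ 0 := hA.ne'
  set w := y / (1-2*a)^2 with hw
  have hw0 : 0 ≤ w := by positivity
  have ht := hTeq w ⟨hw0, h3⟩
  set t := T w with htdef
  have hne : 1 - w * t ≠ 0 := by
    intro hcon
    rw [hcon, div_zero] at ht
    rw [ht, mul_zero, sub_zero] at hcon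
    exact one_ne_zero hcon
  have hteq : t * (1 - w * t) = 1 := by
    have h' := ht
    rw [eq_div_iff hne] at h'
    linarith [h']
  have key : w * t^2 = t - 1 := by nlinarith [hteq]
  have hzw : y = w * (1-2*a)^2 := by
    rw [hw]; field_simp
  have key2 : y * t^2 = (t-1) * (1-2*a)^2 := by
    linear_combination (1-2*a)^2 * key + t^2 * hzw
  rw [h6]
  field_simp
  linear_combination (-1) * key2


private lemma sqrt_le_of_sq_le (u y : ℝ) (hy : 0 ≤ y) (h : u ≤ y^2) : Real.sqrt u ≤ y := by
  calc Real.sqrt u ≤ Real.sqrt (y^2) := Real.sqrt_le_sqrt h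
    _ = y := Real.sqrt_sq hy

private lemma sqrt_add_le' (u v : ℝ) (hu : 0 ≤ u) (hv : 0 ≤ v) :
    Real.sqrt (u + v) ≤ Real.sqrt u + Real.sqrt v := by
  refine sqrt_le_of_sq_le _ _ (by positivity) ?_
  have h1 := Real.sq_sqrt hu
  have h2 := Real.sq_sqrt hv
  nlinarith [mul_nonneg (Real.sqrt_nonneg u) (Real.sqrt_nonneg v)]

private lemma deg_solution (x ρ τ σ : ℝ) (hx : 0 < x) (hρ : 0 < ρ)
    (hτ : 0 < τ) (hσ : 0 < σ) (hτ2 : τ < 1/2) (hσ2 : σ < 1/2)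
    (hsum : τ + σ = 1/2) (h1 : ρ = σ^2) (h2 : x * ρ = τ^2) :
    ∃ z' a b : ℝ, ρ < z' ∧ 0 ≤ a ∧ 0 ≤ b ∧
      a = x * z' + 2*a*b + a^2 ∧ b = z' + 2*a*b + b^2 := by
  set s' := 2*σ*τ with hs'
  have hs'0 : 0 < s' := by positivity
  have hm1 : 0 < 1/4 - σ^2 - s'^2 := by
    have hστ : σ = 1/2 - τ := by linarith
    rw [hs', hστ]
    nlinarith [mul_pos hτ (show (0:ℝ) < 1 - 2*τ by linarith),
      mul_pos (mul_pos hτ (mul_pos hτ hτ)) (show (0:ℝ) < 1 - τ by linarith)]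
  have hm2 : 0 < 1/4 - τ^2 - s'^2 := by
    have hστ : τ = 1/2 - σ := by linarith
    rw [hs', hστ]
    nlinarith [mul_pos hσ (show (0:ℝ) < 1 - 2*σ by linarith),
      mul_pos (mul_pos hσ (mul_pos hσ hσ)) (show (0:ℝ) < 1 - σ by linarith)]
  have hsx : 0 ≤ Real.sqrt x := Real.sqrt_nonneg x
  set ε := min (min (1/4 - σ^2 - s'^2) ((1/4 - τ^2 - s'^2)/x)) ((σ*τ/(2*(1+Real.sqrt x)))^2)
    with hε
  have hε0 : 0 < ε := by
    refine lt_min (lt_min hm1 (by positivity)) (by positivity)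
  set z' := ρ + ε with hz'
  have hz'ρ : ρ < z' := by simp [hz']; linarith
  have hz'0 : 0 < z' := by linarith
  -- bounds at s'
  have hb1 : z' + s'^2 ≤ 1/4 := by
    have : ε ≤ 1/4 - σ^2 - s'^2 := (min_le_left _ _).trans (min_le_left _ _)
    rw [hz', h1]; linarith
  have hb2 : x * z' + s'^2 ≤ 1/4 := by
    have hh : ε ≤ (1/4 - τ^2 - s'^2)/x := (min_le_left _ _).trans (min_le_right _ _)
    have : x * ε ≤ 1/4 - τ^2 - s'^2 := by
      rw [div_eq_inv_mul] at hh
      calc x * ε ≤ x * (x⁻¹ * (1/4 - τ^2 - s'^2)) := by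
            exact mul_le_mul_of_nonneg_left hh hx.le
        _ = 1/4 - τ^2 - s'^2 := by field_simp
    rw [hz', mul_add, h2]; linarith
  -- the key strict bound at s'
  have hsqε : Real.sqrt ε ≤ σ*τ/(2*(1+Real.sqrt x)) := by
    refine sqrt_le_of_sq_le _ _ (by positivity) (min_le_right _ _)
  have hkey : Real.sqrt (z' + s'^2) + Real.sqrt (x*z' + s'^2) < 1/2 + s' := by
    have e1 : z' + s'^2 = (σ^2 + s'^2) + ε := by rw [hz', h1]; ring
    have e2 : x*z' + s'^2 = (τ^2 + s'^2) + x*ε := by rw [hz', mul_add, h2]; ring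
    have b1 : Real.sqrt (z' + s'^2) ≤ (σ + 2*σ*τ^2) + Real.sqrt ε := by
      rw [e1]
      refine (sqrt_add_le' _ _ (by positivity) hε0.le).trans ?_
      gcongr
      refine sqrt_le_of_sq_le _ _ (by positivity) ?_
      rw [hs']; nlinarith [sq_nonneg (σ*τ^2)]
    have b2 : Real.sqrt (x*z' + s'^2) ≤ (τ + 2*σ^2*τ) + Real.sqrt x * Real.sqrt ε := by
      rw [e2]
      have : Real.sqrt (x*ε) = Real.sqrt x * Real.sqrt ε := Real.sqrt_mul hx.le ε
      refine (sqrt_add_le' _ _ (by positivity) (by positivity)).trans ?_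
      rw [this]
      gcongr
      refine sqrt_le_of_sq_le _ _ (by positivity) ?_
      rw [hs']; nlinarith [sq_nonneg (σ^2*τ)]
    have hc : (1 + Real.sqrt x) * Real.sqrt ε ≤ σ*τ/2 := by
      calc (1 + Real.sqrt x) * Real.sqrt ε ≤ (1 + Real.sqrt x) * (σ*τ/(2*(1+Real.sqrt x))) :=
            mul_le_mul_of_nonneg_left hsqε (by positivity)
        _ = σ*τ/2 := by field_simp
    have hστpos : 0 < σ*τ := by positivity
    calc Real.sqrt (z' + s'^2) + Real.sqrt (x*z' + s'^2)
        ≤ (σ + 2*σ*τ^2) + (τ + 2*σ^2*τ) + (1 + Real.sqrt x) * Real.sqrt ε := by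
          rw [add_mul, one_mul]; linarith
      _ ≤ (σ + τ) + 2*σ*τ*(τ + σ) + σ*τ/2 := by linarith [hc]
      _ = 1/2 + σ*τ + σ*τ/2 := by linear_combination (1+2*σ*τ)*hsum
      _ < 1/2 + s' := by rw [hs']; linarith
  -- lower bound at 0
  have hlow : 1/2 < Real.sqrt z' + Real.sqrt (x*z') := by
    have l1 : σ < Real.sqrt z' := by
      have h' : Real.sqrt (σ^2) < Real.sqrt z' := by
        refine Real.sqrt_lt_sqrt (by positivity) ?_
        rw [hz', h1]; linarith
      rwa [Real.sqrt_sq hσ.le] at h'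
    have l2 : τ < Real.sqrt (x*z') := by
      have h' : Real.sqrt (τ^2) < Real.sqrt (x*z') := by
        refine Real.sqrt_lt_sqrt (by positivity) ?_
        rw [hz', ← h2]; nlinarith
      rwa [Real.sqrt_sq hτ.le] at h'
    linarith
  -- IVT
  set φ : ℝ → ℝ := fun s => Real.sqrt (z' + s^2) + Real.sqrt (x*z' + s^2) - s with hφ
  have hcont : ContinuousOn φ (Set.Icc 0 s') := by
    apply Continuous.continuousOn
    exact ((Real.continuous_sqrt.comp (continuous_const.add (continuous_pow 2))).add
      (Real.continuous_sqrt.comp (continuous_const.add (continuous_pow 2)))).sub continuous_id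
  have hφ0 : φ 0 = Real.sqrt z' + Real.sqrt (x*z') := by
    rw [hφ]; norm_num
  have hφs' : φ s' = Real.sqrt (z' + s'^2) + Real.sqrt (x*z' + s'^2) - s' := by rw [hφ]
  have hmem : (1/2 : ℝ) ∈ Set.Icc (φ s') (φ 0) := by
    constructor
    · rw [hφs']; linarith [hkey]
    · rw [hφ0]; linarith [hlow]
  obtain ⟨s, hsmem, hseq⟩ := intermediate_value_Icc' hs'0.le hcont hmem
  have hs0 : 0 ≤ s := hsmem.1
  have hss' : s ≤ s' := hsmem.2
  -- define a b
  set B := Real.sqrt (z' + s^2) with hB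
  set A := Real.sqrt (x*z' + s^2) with hA
  have hzs0 : (0:ℝ) ≤ z' + s^2 := by positivity
  have hxzs0 : (0:ℝ) ≤ x*z' + s^2 := by positivity
  have hB2 : B^2 = z' + s^2 := Real.sq_sqrt hzs0
  have hA2 : A^2 = x*z' + s^2 := Real.sq_sqrt hxzs0
  have hAB : A + B = 1/2 + s := by
    have hseq' : Real.sqrt (z' + s^2) + Real.sqrt (x*z' + s^2) - s = 1/2 := hseq
    rw [hA, hB]; linarith
  have hs2 : s^2 ≤ s'^2 := by nlinarith
  have hBle : B ≤ 1/2 := by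
    refine sqrt_le_of_sq_le _ _ (by norm_num) ?_
    norm_num; linarith
  have hAle : A ≤ 1/2 := by
    refine sqrt_le_of_sq_le _ _ (by norm_num) ?_
    norm_num; linarith
  refine ⟨z', 1/2 - B, 1/2 - A, hz'ρ, by linarith, by linarith, ?_, ?_⟩
  · have h2AB : 2*A*B = (1/2+s)^2 - (x*z'+s^2) - (z'+s^2) := by
      linear_combination (A + B + (1/2+s)) * hAB - hA2 - hB2
    linear_combination hAB - h2AB - hB2
  · have h2AB : 2*A*B = (1/2+s)^2 - (x*z'+s^2) - (z'+s^2) := by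
      linear_combination (A + B + (1/2+s)) * hAB - hA2 - hB2
    linear_combination hAB - h2AB - hA2

private lemma coeff_recursion (u v : ℕ → ℝ) (hu : ∀ n, 0 ≤ u n) (hv : ∀ n, 0 ≤ v n)
    (c0 : ℝ) (hc0 : 0 ≤ c0) (ρ : ℝ) (hρ : 0 < ρ)
    (hsu : ∀ z : ℝ, 0 < z → z < ρ → Summable (fun n => u n * z ^ n))
    (hsv : ∀ z : ℝ, 0 < z → z < ρ → Summable (fun n => v n * z ^ n))
    (hid : ∀ z : ℝ, 0 < z → z < ρ →
      (∑' n, u n * z ^ n) = c0 * z + 2 * (∑' n, u n * z ^ n) * (∑' n, v n * z ^ n)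
        + (∑' n, u n * z ^ n) ^ 2) :
    ∀ n, u n = (if n = 1 then c0 else 0)
      + (2 * (∑ k ∈ Finset.range (n+1), u k * v (n-k))
          + ∑ k ∈ Finset.range (n+1), u k * u (n-k)) := by
  set c : ℕ → ℝ := fun n => u n - ((if n = 1 then c0 else 0)
      + (2 * (∑ k ∈ Finset.range (n+1), u k * v (n-k))
          + ∑ k ∈ Finset.range (n+1), u k * u (n-k))) with hc
  have hconv : ∀ z : ℝ, 0 < z → z < ρ →
      Summable (fun n => (∑ k ∈ Finset.range (n+1), u k * v (n-k)) * z ^ n) ∧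
      Summable (fun n => (∑ k ∈ Finset.range (n+1), u k * u (n-k)) * z ^ n) ∧
      Summable (fun n => (if n = 1 then c0 else 0) * z ^ n) := by
    intro z hz1 hz2
    exact ⟨(cauchy_conv u v hu hv z hz1.le (hsu z hz1 hz2) (hsv z hz1 hz2)).1,
      (cauchy_conv u u hu hu z hz1.le (hsu z hz1 hz2) (hsu z hz1 hz2)).1,
      summable_of_ne_finset_zero (s := {1}) (fun b hb => by
        simp only [Finset.mem_singleton] at hb
        simp [hb])⟩
  have hite : ∀ z : ℝ, (∑' n : ℕ, (if n = 1 then c0 else 0) * z ^ n) = c0 * z := by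
    intro z
    rw [tsum_eq_single 1 (fun b hb => by simp [hb])]
    simp
  have key : ∀ n, c n = 0 := by
    intro n
    refine coeff_zero ρ hρ n c (fun z hz1 hz2 => ?_) (fun z hz1 hz2 => ?_)
    · obtain ⟨s1, s2, s3⟩ := hconv z hz1 hz2
      have hmaj : Summable (fun n => (u n + (if n = 1 then c0 else 0)
          + (2 * (∑ k ∈ Finset.range (n+1), u k * v (n-k))
            + ∑ k ∈ Finset.range (n+1), u k * u (n-k))) * z ^ n) := by
        have := ((hsu z hz1 hz2).add s3).add ((s1.mul_left 2).add s2)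
        refine this.congr fun n => ?_
        ring
      refine hmaj.of_nonneg_of_le (fun n => by positivity) (fun n => ?_)
      have h1 : |c n| ≤ u n + (if n = 1 then c0 else 0)
          + (2 * (∑ k ∈ Finset.range (n+1), u k * v (n-k))
            + ∑ k ∈ Finset.range (n+1), u k * u (n-k)) := by
        rw [hc]
        have t1 : 0 ≤ u n := hu n
        have t2 : (0:ℝ) ≤ (if n = 1 then c0 else 0) := by positivity
        have t3 : 0 ≤ ∑ k ∈ Finset.range (n+1), u k * v (n-k) :=
          Finset.sum_nonneg fun k _ => mul_nonneg (hu k) (hv _)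
        have t4 : 0 ≤ ∑ k ∈ Finset.range (n+1), u k * u (n-k) :=
          Finset.sum_nonneg fun k _ => mul_nonneg (hu k) (hu _)
        rw [abs_sub_comm, abs_le]
        constructor <;> nlinarith
      exact mul_le_mul_of_nonneg_right h1 (by positivity)
    · obtain ⟨s1, s2, s3⟩ := hconv z hz1 hz2
      have hcz : ∀ n, c n * z ^ n = u n * z ^ n - ((if n = 1 then c0 else 0) * z ^ n
          + (2 * ((∑ k ∈ Finset.range (n+1), u k * v (n-k)) * z ^ n)
            + (∑ k ∈ Finset.range (n+1), u k * u (n-k)) * z ^ n)) := by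
        intro n; rw [hc]; ring
      rw [tsum_congr hcz,
        Summable.tsum_sub (hsu z hz1 hz2) (s3.add ((s1.mul_left 2).add s2)),
        Summable.tsum_add s3 ((s1.mul_left 2).add s2),
        Summable.tsum_add (s1.mul_left 2) s2, tsum_mul_left, hite z,
        ← (cauchy_conv u v hu hv z hz1.le (hsu z hz1 hz2) (hsv z hz1 hz2)).2,
        ← (cauchy_conv u u hu hu z hz1.le (hsu z hz1 hz2) (hsu z hz1 hz2)).2]
      have := hid z hz1 hz2
      rw [sub_eq_zero]
      linear_combination this
  intro n
  have := key n
  rw [hc] at this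
  simp only at this
  linarith [this]

private lemma summable_of_system (u v : ℕ → ℝ) (hu : ∀ n, 0 ≤ u n) (hv : ∀ n, 0 ≤ v n)
    (hu0 : u 0 = 0) (hv0 : v 0 = 0) (cu cv : ℝ) (hcu : 0 ≤ cu) (hcv : 0 ≤ cv)
    (hru : ∀ n, u n = (if n = 1 then cu else 0)
      + (2 * (∑ k ∈ Finset.range (n+1), u k * v (n-k))
          + ∑ k ∈ Finset.range (n+1), u k * u (n-k)))
    (hrv : ∀ n, v n = (if n = 1 then cv else 0)
      + (2 * (∑ k ∈ Finset.range (n+1), v k * u (n-k))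
          + ∑ k ∈ Finset.range (n+1), v k * v (n-k)))
    (z a b : ℝ) (hz : 0 < z) (ha : 0 ≤ a) (hb : 0 ≤ b)
    (hae : a = cu * z + 2*a*b + a^2) (hbe : b = cv * z + 2*b*a + b^2) :
    Summable (fun n => u n * z ^ n) := by
  have hite : ∀ (c : ℝ) (M : ℕ), 0 ≤ c →
      ∑ n ∈ Finset.range M, (if n = 1 then c else 0) * z ^ n ≤ c * z := by
    intro c M hc
    have h1 : ∀ n ∈ Finset.range M, (if n = 1 then c else 0) * z ^ n
        = if n = 1 then c * z ^ 1 else 0 := by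
      intro n hn
      by_cases h : n = 1 <;> simp [h]
    rw [Finset.sum_congr rfl h1, Finset.sum_ite_eq' (Finset.range M) 1 (fun n => c * z ^ 1)]
    split_ifs with h
    · simp
    · positivity
  have hnn : ∀ N, 0 ≤ ∑ n ∈ Finset.range N, u n * z ^ n :=
    fun N => Finset.sum_nonneg fun n _ => mul_nonneg (hu n) (by positivity)
  have hnnv : ∀ N, 0 ≤ ∑ n ∈ Finset.range N, v n * z ^ n :=
    fun N => Finset.sum_nonneg fun n _ => mul_nonneg (hv n) (by positivity)
  have key : ∀ N, (∑ n ∈ Finset.range N, u n * z ^ n) ≤ a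
      ∧ (∑ n ∈ Finset.range N, v n * z ^ n) ≤ b := by
    intro N
    induction N with
    | zero => simpa using ⟨ha, hb⟩
    | succ N ih =>
      have expand : ∀ (cc : ℝ) (w w' : ℕ → ℝ), (∀ n, w n = (if n = 1 then cc else 0)
          + (2 * (∑ k ∈ Finset.range (n+1), w k * w' (n-k))
              + ∑ k ∈ Finset.range (n+1), w k * w (n-k))) →
          ∑ n ∈ Finset.range (N+1), w n * z ^ n
            = (∑ n ∈ Finset.range (N+1), (if n = 1 then cc else 0) * z ^ n)
            + (2 * ∑ n ∈ Finset.range (N+1), (∑ k ∈ Finset.range (n+1), w k * w' (n-k)) * z ^ n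
              + ∑ n ∈ Finset.range (N+1), (∑ k ∈ Finset.range (n+1), w k * w (n-k)) * z ^ n) := by
        intro cc w w' hw
        calc ∑ n ∈ Finset.range (N+1), w n * z ^ n
            = ∑ n ∈ Finset.range (N+1), ((if n = 1 then cc else 0) * z ^ n
              + (2 * ((∑ k ∈ Finset.range (n+1), w k * w' (n-k)) * z ^ n)
                + (∑ k ∈ Finset.range (n+1), w k * w (n-k)) * z ^ n)) :=
              Finset.sum_congr rfl fun n _ => by rw [hw n]; ring
          _ = _ := by
              rw [Finset.sum_add_distrib, Finset.sum_add_distrib, ← Finset.mul_sum]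
      constructor
      · rw [expand cu u v hru]
        have b1 := hite cu (N+1) hcu
        have b2 := conv_partial_le u v hu hv hu0 hv0 z hz.le N
        have b3 := conv_partial_le u u hu hu hu0 hu0 z hz.le N
        have m1 : (∑ k ∈ Finset.range N, u k * z ^ k) * (∑ j ∈ Finset.range N, v j * z ^ j)
            ≤ a * b := mul_le_mul ih.1 ih.2 (hnnv N) ha
        have m2 : (∑ k ∈ Finset.range N, u k * z ^ k) * (∑ j ∈ Finset.range N, u j * z ^ j)
            ≤ a * a := mul_le_mul ih.1 ih.1 (hnn N) ha
        nlinarith [hae]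
      · rw [expand cv v u hrv]
        have b1 := hite cv (N+1) hcv
        have b2 := conv_partial_le v u hv hu hv0 hu0 z hz.le N
        have b3 := conv_partial_le v v hv hv hv0 hv0 z hz.le N
        have m1 : (∑ k ∈ Finset.range N, v k * z ^ k) * (∑ j ∈ Finset.range N, u j * z ^ j)
            ≤ b * a := mul_le_mul ih.2 ih.1 (hnn N) hb
        have m2 : (∑ k ∈ Finset.range N, v k * z ^ k) * (∑ j ∈ Finset.range N, v j * z ^ j)
            ≤ b * b := mul_le_mul ih.2 ih.2 (hnnv N) hb
        nlinarith [hbe]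
  refine summable_of_sum_range_le (fun n => mul_nonneg (hu n) (by positivity)) (fun N => (key N).1)

end BicoloredTreeAux

set_option maxHeartbeats 1000000 in
open Finset in
/-- The "Claim" in the proof of Theorem 3.3 of the paper (admissibility of the
system defining the weighted generating functions `f`, `g` of black- and
white-rooted bicolored labelled trees with weight `x` at black vertices).
Here `T` is the Catalan generating function (of rooted plane trees counted by
edges), `f` and `g` are power series with nonnegative coefficients and zero
constant term satisfying the system on `(0, ρ)`, where `ρ` is the radius of
convergence of `f`.  The conclusion is that the one-sided limits
`τ = lim_{z→ρ⁻} f(z)` and `σ = lim_{z→ρ⁻} g(z)` exist and satisfy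
`τ < 1/2`, `σ < 1/2`, `ρ/(1-2τ)² < 1/4` and `xρ/(1-2σ)² < 1/4`. -/
theorem bicolored_tree_system_admissible
    (x : ℝ) (hx : 0 < x)
    (T : ℝ → ℝ) (hT0 : T 0 = 1)
    (hTcont : ContinuousOn T (Set.Icc 0 (1 / 4)))
    (hTeq : ∀ w ∈ Set.Icc (0 : ℝ) (1 / 4), T w = 1 / (1 - w * T w))
    (fc gc : ℕ → ℝ) (hfc : ∀ n, 0 ≤ fc n) (hgc : ∀ n, 0 ≤ gc n)
    (hfc0 : fc 0 = 0) (hgc0 : gc 0 = 0)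
    (f g : ℝ → ℝ)
    (hf : ∀ z : ℝ, f z = ∑' n : ℕ, fc n * z ^ n)
    (hg : ∀ z : ℝ, g z = ∑' n : ℕ, gc n * z ^ n)
    (ρ : ℝ) (hρ : 0 < ρ)
    (hconv : ∀ z : ℝ, 0 ≤ z → z < ρ → Summable (fun n : ℕ => fc n * z ^ n))
    (hdiv : ∀ z : ℝ, ρ < z → ¬ Summable (fun n : ℕ => fc n * z ^ n))
    (hsys : ∀ z : ℝ, 0 < z → z < ρ →
      f z < 1 / 2 ∧ g z < 1 / 2 ∧
      z / (1 - 2 * f z) ^ 2 ≤ 1 / 4 ∧ x * z / (1 - 2 * g z) ^ 2 ≤ 1 / 4 ∧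
      f z = (x * z / (1 - 2 * g z)) * T (x * z / (1 - 2 * g z) ^ 2) ∧
      g z = (z / (1 - 2 * f z)) * T (z / (1 - 2 * f z) ^ 2)) :
    ∃ τ σ : ℝ,
      Tendsto f (nhdsWithin ρ (Set.Iio ρ)) (nhds τ) ∧
      Tendsto g (nhdsWithin ρ (Set.Iio ρ)) (nhds σ) ∧
      τ < 1 / 2 ∧ σ < 1 / 2 ∧
      ρ / (1 - 2 * τ) ^ 2 < 1 / 4 ∧ x * ρ / (1 - 2 * σ) ^ 2 < 1 / 4 := by
  -- the polynomial system on (0, ρ)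
  have hpoly : ∀ z : ℝ, 0 < z → z < ρ →
      f z = x*z + 2*(f z)*(g z) + (f z)^2 ∧ g z = z + 2*(f z)*(g z) + (g z)^2 := by
    intro z hz1 hz2
    obtain ⟨h1, h2, h3, h4, h5, h6⟩ := hsys z hz1 hz2
    have e2 := quad_id T hTeq (f z) (g z) z hz1 h1 h3 h6
    have e1 := quad_id T hTeq (g z) (f z) (x*z) (by positivity) h2 h4 h5
    exact ⟨by linear_combination e1, by linear_combination e2⟩
  -- nonnegativity of values
  have hfnn : ∀ z : ℝ, 0 ≤ z → 0 ≤ f z := by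
    intro z hz
    rw [hf]
    exact tsum_nonneg fun n => mul_nonneg (hfc n) (by positivity)
  have hgnn : ∀ z : ℝ, 0 ≤ z → 0 ≤ g z := by
    intro z hz
    rw [hg]
    exact tsum_nonneg fun n => mul_nonneg (hgc n) (by positivity)
  -- summability of the g-series on (0, ρ)
  have hgconv : ∀ z : ℝ, 0 < z → z < ρ → Summable (fun n : ℕ => gc n * z ^ n) := by
    intro z hz1 hz2
    by_contra hns
    have h0 : g z = 0 := by rw [hg]; exact tsum_eq_zero_of_not_summable hns
    have h1 := (hpoly z hz1 hz2).2
    rw [h0] at h1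
    nlinarith
  -- monotonicity
  have hmf : MonotoneOn f (Set.Ioo 0 ρ) := by
    intro z1 hz1 z2 hz2 h12
    rw [hf z1, hf z2]
    refine Summable.tsum_le_tsum (fun n => ?_) (hconv z1 hz1.1.le hz1.2) (hconv z2 hz2.1.le hz2.2)
    exact mul_le_mul_of_nonneg_left (pow_le_pow_left₀ hz1.1.le h12 n) (hfc n)
  have hmg : MonotoneOn g (Set.Ioo 0 ρ) := by
    intro z1 hz1 z2 hz2 h12
    rw [hg z1, hg z2]
    refine Summable.tsum_le_tsum (fun n => ?_) (hgconv z1 hz1.1 hz1.2) (hgconv z2 hz2.1 hz2.2)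
    exact mul_le_mul_of_nonneg_left (pow_le_pow_left₀ hz1.1.le h12 n) (hgc n)
  have hne : (Set.Ioo (0:ℝ) ρ).Nonempty := ⟨ρ/2, by constructor <;> linarith⟩
  have hbddf : BddAbove (f '' Set.Ioo 0 ρ) := by
    refine ⟨1/2, ?_⟩
    rintro y ⟨z, hz, rfl⟩
    exact (hsys z hz.1 hz.2).1.le
  have hbddg : BddAbove (g '' Set.Ioo 0 ρ) := by
    refine ⟨1/2, ?_⟩
    rintro y ⟨z, hz, rfl⟩
    exact (hsys z hz.1 hz.2).2.1.le
  set τ := sSup (f '' Set.Ioo 0 ρ) with hτdef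
  set σ := sSup (g '' Set.Ioo 0 ρ) with hσdef
  have htf : Tendsto f (nhdsWithin ρ (Set.Iio ρ)) (nhds τ) :=
    hmf.tendsto_nhdsWithin_Ioo_left hne hbddf
  have htg : Tendsto g (nhdsWithin ρ (Set.Iio ρ)) (nhds σ) :=
    hmg.tendsto_nhdsWithin_Ioo_left hne hbddg
  -- basic bounds on τ, σ
  have hmem2 : (ρ/2 : ℝ) ∈ Set.Ioo (0:ℝ) ρ := ⟨by linarith, by linarith⟩
  have hτ0 : 0 < τ := by
    have h1 : f (ρ/2) ≤ τ := le_csSup hbddf (Set.mem_image_of_mem f hmem2)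
    have h2 := (hpoly (ρ/2) hmem2.1 hmem2.2).1
    have h3 := hfnn (ρ/2) (by linarith)
    have h4 := hgnn (ρ/2) (by linarith)
    nlinarith
  have hσ0 : 0 < σ := by
    have h1 : g (ρ/2) ≤ σ := le_csSup hbddg (Set.mem_image_of_mem g hmem2)
    have h2 := (hpoly (ρ/2) hmem2.1 hmem2.2).2
    have h3 := hfnn (ρ/2) (by linarith)
    have h4 := hgnn (ρ/2) (by linarith)
    nlinarith
  -- limit equations
  have hIoo : ∀ᶠ z in nhdsWithin ρ (Set.Iio ρ), z ∈ Set.Ioo (0:ℝ) ρ := by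
    filter_upwards [Ioo_mem_nhdsLT hρ] with z hz using hz
  have hidt : Tendsto (fun z : ℝ => z) (nhdsWithin ρ (Set.Iio ρ)) (nhds ρ) :=
    tendsto_id.mono_left nhdsWithin_le_nhds
  have htg2 : Tendsto (fun z => z + 2*(f z)*(g z) + (g z)^2)
      (nhdsWithin ρ (Set.Iio ρ)) (nhds (ρ + 2*τ*σ + σ^2)) :=
    (hidt.add ((htf.const_mul 2).mul htg)).add (htg.pow 2)
  have htf2 : Tendsto (fun z => x*z + 2*(f z)*(g z) + (f z)^2)
      (nhdsWithin ρ (Set.Iio ρ)) (nhds (x*ρ + 2*τ*σ + τ^2)) :=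
    ((hidt.const_mul x).add ((htf.const_mul 2).mul htg)).add (htf.pow 2)
  have hσeq : σ = ρ + 2*τ*σ + σ^2 := by
    refine tendsto_nhds_unique htg (htg2.congr' ?_)
    filter_upwards [hIoo] with z hz
    exact ((hpoly z hz.1 hz.2).2).symm
  have hτeq : τ = x*ρ + 2*τ*σ + τ^2 := by
    refine tendsto_nhds_unique htf (htf2.congr' ?_)
    filter_upwards [hIoo] with z hz
    exact ((hpoly z hz.1 hz.2).1).symm
  have r1 : σ*(1 - 2*τ - σ) = ρ := by linear_combination hσeq
  have r2 : τ*(1 - 2*σ - τ) = x*ρ := by linear_combination hτeq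
  -- strict bounds
  have hτlt : τ < 1/2 := by
    by_contra h
    push_neg at h
    nlinarith [mul_nonneg hσ0.le (by linarith : (0:ℝ) ≤ 2*τ - 1), sq_nonneg σ]
  have hσlt : σ < 1/2 := by
    by_contra h
    push_neg at h
    nlinarith [mul_nonneg hτ0.le (by linarith : (0:ℝ) ≤ 2*σ - 1), sq_nonneg τ,
      mul_pos hx hρ]
  refine ⟨τ, σ, htf, htg, hτlt, hσlt, ?_, ?_⟩
  all_goals by_cases hdeg : τ + σ = 1/2
  case neg =>
    have hc : (0:ℝ) < 1 - 2*τ := by linarith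
    rw [div_lt_iff₀ (by positivity)]
    have hne2 : (1 - 2*τ - 2*σ) ≠ 0 := fun h => hdeg (by linarith)
    have hsq : 0 < (1 - 2*τ - 2*σ)^2 := by positivity
    nlinarith [r1]
  case neg =>
    have hc : (0:ℝ) < 1 - 2*σ := by linarith
    rw [div_lt_iff₀ (by positivity)]
    have hne2 : (1 - 2*σ - 2*τ) ≠ 0 := fun h => hdeg (by linarith)
    have hsq : 0 < (1 - 2*σ - 2*τ)^2 := by positivity
    nlinarith [r2]
  all_goals {
    exfalso
    have hρσ : ρ = σ^2 := by linear_combination (-1)*r1 - 2*σ*hdeg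
    have hxρτ : x*ρ = τ^2 := by linear_combination (-1)*r2 - 2*τ*hdeg
    obtain ⟨z', a, b, hz'ρ, ha, hb, hae, hbe⟩ :=
      deg_solution x ρ τ σ hx hρ hτ0 hσ0 hτlt hσlt hdeg hρσ hxρτ
    -- coefficient recursions
    have hidf : ∀ z : ℝ, 0 < z → z < ρ →
        (∑' n, fc n * z ^ n) = x * z + 2 * (∑' n, fc n * z ^ n) * (∑' n, gc n * z ^ n)
          + (∑' n, fc n * z ^ n) ^ 2 := by
      intro z hz1 hz2
      have := (hpoly z hz1 hz2).1
      rw [hf z, hg z] at this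
      linear_combination this
    have hidg : ∀ z : ℝ, 0 < z → z < ρ →
        (∑' n, gc n * z ^ n) = 1 * z + 2 * (∑' n, gc n * z ^ n) * (∑' n, fc n * z ^ n)
          + (∑' n, gc n * z ^ n) ^ 2 := by
      intro z hz1 hz2
      have := (hpoly z hz1 hz2).2
      rw [hf z, hg z] at this
      linear_combination this
    have hrecf := coeff_recursion fc gc hfc hgc x hx.le ρ hρ
      (fun z hz1 hz2 => hconv z hz1.le hz2) hgconv hidf
    have hrecg := coeff_recursion gc fc hgc hfc 1 (by norm_num) ρ hρ
      hgconv (fun z hz1 hz2 => hconv z hz1.le hz2) hidg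
    have hsummable := summable_of_system fc gc hfc hgc hfc0 hgc0 x 1 hx.le (by norm_num)
      hrecf hrecg z' a b (by linarith) ha hb hae (by linear_combination hbe)
    exact hdiv z' hz'ρ hsummable }
end

section
/- Let f : ℕ × ℕ → ℝ satisfy f(i,j) ≥ 0 for all i, j and f(0,j) = 0 for all j, and let ρ > 0. Define a sequence (τ_h) in [0, ∞] by τ₀ = 0 and τ_{h+1} = Σ_{i,j} f(i,j) · ρ^i · (τ_h)^j (with the convention 0⁰ = 1); this sequence is nondecreasing. Assume that τ* := sup_h τ_h is finite, that Σ_{i,j} f(i,j) ρ^i (τ*)^j converges, and that Σ_{i,j} j · f(i,j) · ρ^i · (τ*)^{j−1} < 1. Then there exist constants C > 0 and c > 0 such that τ* − τ_h ≤ C · e^{−c·h} for all h ≥ 0. -/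
open Real ENNReal

lemma aux_pow_sub_le (a b : ℝ≥0∞) (hba : b ≤ a) :
    ∀ j : ℕ, a ^ j ≤ b ^ j + (j : ℝ≥0∞) * a ^ (j - 1) * (a - b) := by
  intro j
  induction j with
  | zero => simp
  | succ j ih =>
    have h1 : a ^ (j + 1) = a * a ^ j := by ring
    have h2 : a * a ^ j ≤ a * (b ^ j + (j : ℝ≥0∞) * a ^ (j - 1) * (a - b)) :=
      mul_le_mul_right ih a
    have h3 : a * b ^ j ≤ b ^ (j + 1) + a ^ j * (a - b) := by
      have : a = (a - b) + b := (tsub_add_cancel_of_le hba).symm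
      calc a * b ^ j = ((a - b) + b) * b ^ j := by rw [← this]
        _ = (a - b) * b ^ j + b ^ (j + 1) := by ring
        _ ≤ (a - b) * a ^ j + b ^ (j + 1) :=
            add_le_add_left (mul_le_mul_right (pow_le_pow_left' hba j) _) _
        _ = b ^ (j + 1) + a ^ j * (a - b) := by ring
    have h4 : a * ((j : ℝ≥0∞) * a ^ (j - 1) * (a - b)) ≤ (j : ℝ≥0∞) * a ^ j * (a - b) := by
      cases j with
      | zero => simp
      | succ k =>
        have : a * ((((k : ℕ) + 1 : ℕ) : ℝ≥0∞) * a ^ ((k + 1) - 1) * (a - b)) =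
            (((k : ℕ) + 1 : ℕ) : ℝ≥0∞) * a ^ (k + 1) * (a - b) := by
          simp only [Nat.add_sub_cancel]
          ring
        rw [this]
    calc a ^ (j + 1) = a * a ^ j := h1
      _ ≤ a * (b ^ j + (j : ℝ≥0∞) * a ^ (j - 1) * (a - b)) := h2
      _ = a * b ^ j + a * ((j : ℝ≥0∞) * a ^ (j - 1) * (a - b)) := by ring
      _ ≤ (b ^ (j + 1) + a ^ j * (a - b)) + (j : ℝ≥0∞) * a ^ j * (a - b) :=
          add_le_add h3 h4
      _ = b ^ (j + 1) + (((j : ℝ≥0∞) + 1) * a ^ ((j + 1) - 1) * (a - b)) := by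
          simp only [Nat.add_sub_cancel]; ring
      _ = b ^ (j + 1) + ((j + 1 : ℕ) : ℝ≥0∞) * a ^ ((j + 1) - 1) * (a - b) := by
          push_cast; ring

/-- The core estimate in the proof of Lemma 4.2 of the paper (critical-case
height lemma): for a bivariate power series `F(z,y) = ∑ f(i,j) zⁱ yʲ` with
nonnegative coefficients and `F(0,y) = 0`, the iterates `τ₀ = 0`,
`τ_{h+1} = F(ρ, τ_h)` (computed in `[0,∞]`) converge geometrically to
`τ* = sup_h τ_h`, provided `τ*` is finite, `F(ρ, τ*)` converges, and
`F_y(ρ, τ*) < 1`. -/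
theorem critical_iteration_geometric_convergence
    (f : ℕ × ℕ → ℝ) (hf : ∀ p, 0 ≤ f p) (hf0 : ∀ j : ℕ, f (0, j) = 0)
    (ρ : ℝ) (hρ : 0 < ρ)
    (τ : ℕ → ℝ≥0∞) (hτ0 : τ 0 = 0)
    (hτrec : ∀ h : ℕ, τ (h + 1) =
      ∑' p : ℕ × ℕ, ENNReal.ofReal (f p) * ENNReal.ofReal ρ ^ p.1 * τ h ^ p.2)
    (τs : ℝ≥0∞) (hτs : τs = ⨆ h : ℕ, τ h) (hfin : τs ≠ ⊤)
    (hconv : (∑' p : ℕ × ℕ, ENNReal.ofReal (f p) * ENNReal.ofReal ρ ^ p.1 * τs ^ p.2) ≠ ⊤)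
    (hcrit : (∑' p : ℕ × ℕ,
        (p.2 : ℝ≥0∞) * ENNReal.ofReal (f p) * ENNReal.ofReal ρ ^ p.1 * τs ^ (p.2 - 1)) < 1) :
    ∃ C > (0 : ℝ), ∃ c > (0 : ℝ), ∀ h : ℕ,
      τs - τ h ≤ ENNReal.ofReal (C * Real.exp (-c * h)) := by
  set a : ℕ × ℕ → ℝ≥0∞ := fun p => ENNReal.ofReal (f p) * ENNReal.ofReal ρ ^ p.1 with ha
  set L : ℝ≥0∞ := ∑' p : ℕ × ℕ,
      (p.2 : ℝ≥0∞) * ENNReal.ofReal (f p) * ENNReal.ofReal ρ ^ p.1 * τs ^ (p.2 - 1) with hL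
  -- every τ h is below τs
  have hle : ∀ h, τ h ≤ τs := fun h => hτs ▸ le_iSup τ h
  -- τs ≤ F(ρ, τs)
  have hτs_le : τs ≤ ∑' p : ℕ × ℕ, a p * τs ^ p.2 := by
    refine le_trans (le_of_eq hτs) (iSup_le ?_)
    intro h
    cases h with
    | zero => rw [hτ0]; exact zero_le'
    | succ h =>
      rw [hτrec h]
      exact ENNReal.tsum_le_tsum fun p =>
        mul_le_mul_right (pow_le_pow_left' (hle h) p.2) (a p)
  -- key contraction step
  have key : ∀ h, τs - τ (h + 1) ≤ L * (τs - τ h) := by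
    intro h
    rw [tsub_le_iff_right, hτrec h]
    calc τs ≤ ∑' p : ℕ × ℕ, a p * τs ^ p.2 := hτs_le
      _ ≤ ∑' p : ℕ × ℕ, (a p * τ h ^ p.2 +
            ((p.2 : ℝ≥0∞) * a p * τs ^ (p.2 - 1)) * (τs - τ h)) := by
          apply ENNReal.tsum_le_tsum
          intro p
          calc a p * τs ^ p.2
              ≤ a p * (τ h ^ p.2 + (p.2 : ℝ≥0∞) * τs ^ (p.2 - 1) * (τs - τ h)) :=
                mul_le_mul_right (aux_pow_sub_le τs (τ h) (hle h) p.2) (a p)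
            _ = a p * τ h ^ p.2 + ((p.2 : ℝ≥0∞) * a p * τs ^ (p.2 - 1)) * (τs - τ h) := by
                ring
      _ = (∑' p : ℕ × ℕ, a p * τ h ^ p.2) +
            ∑' p : ℕ × ℕ, ((p.2 : ℝ≥0∞) * a p * τs ^ (p.2 - 1)) * (τs - τ h) :=
          ENNReal.tsum_add
      _ = L * (τs - τ h) + ∑' p : ℕ × ℕ, a p * τ h ^ p.2 := by
          rw [ENNReal.tsum_mul_right, add_comm]
          congr 1
          exact congrArg (· * (τs - τ h)) (tsum_congr fun p => by simp only [ha]; ring)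
  -- geometric bound
  have geo : ∀ h, τs - τ h ≤ L ^ h * τs := by
    intro h
    induction h with
    | zero => simp [hτ0]
    | succ h ih =>
      calc τs - τ (h + 1) ≤ L * (τs - τ h) := key h
        _ ≤ L * (L ^ h * τs) := mul_le_mul_right ih L
        _ = L ^ (h + 1) * τs := by ring
  -- convert to real constants
  have hLne : L ≠ ⊤ := ne_top_of_lt hcrit
  have hLlt1 : L.toReal < 1 := by
    rw [← ENNReal.toReal_one]
    exact (ENNReal.toReal_lt_toReal hLne (by simp)).2 hcrit
  set q : ℝ := max L.toReal (1 / 2) with hq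
  have hq0 : 0 < q := lt_of_lt_of_le (by norm_num) (le_max_right _ _)
  have hq1 : q < 1 := max_lt hLlt1 (by norm_num)
  have hLq : L ≤ ENNReal.ofReal q := by
    rw [← ENNReal.ofReal_toReal hLne]
    exact ENNReal.ofReal_le_ofReal (le_max_left _ _)
  refine ⟨τs.toReal + 1, by positivity, -Real.log q, ?_, ?_⟩
  · simp only [neg_pos]
    exact Real.log_neg hq0 hq1
  · intro h
    have hexp : Real.exp (-(-Real.log q) * h) = q ^ h := by
      rw [neg_neg, mul_comm, Real.exp_nat_mul, Real.exp_log hq0]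
    rw [hexp]
    calc τs - τ h ≤ L ^ h * τs := geo h
      _ ≤ (ENNReal.ofReal q) ^ h * ENNReal.ofReal τs.toReal := by
          rw [ENNReal.ofReal_toReal hfin]
          exact mul_le_mul_left (pow_le_pow_left' hLq h) τs
      _ = ENNReal.ofReal (q ^ h * τs.toReal) := by
          rw [ENNReal.ofReal_mul (by positivity), ENNReal.ofReal_pow hq0.le]
      _ ≤ ENNReal.ofReal ((τs.toReal + 1) * q ^ h) := by
          apply ENNReal.ofReal_le_ofReal
          have h1 : 0 ≤ q ^ h := by positivity
          nlinarith [ENNReal.toReal_nonneg (a := τs)]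
end

section
/- Let ρ > 0 and let (a_h)_{h ≥ 0} be a sequence of functions a_h : ℕ → ℝ with 0 ≤ a_h(n) ≤ a_{h+1}(n) for all h and n, and suppose a(n) := sup_h a_h(n) is finite for every n. Assume there are constants C > 0 and c > 0 such that Σ_n (a(n) − a_h(n)) · ρ^n ≤ C · e^{−c·h} for every h ≥ 0, and that there are α > 0, c₁ > 0 and N such that a(n) ≥ c₁ · n^{−α} · ρ^{−n} for all n ≥ N. Then there exists c' > 0 such that for every sufficiently small ε > 0 there is n₀(ε) with: for all n ≥ n₀(ε), (a(n) − a_{⌊n^ε⌋}(n)) / a(n) ≤ exp(−n^{c'ε}). -/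
open Real Filter

/-- The concluding step of Lemma 4.2 of the paper: if `a_h(n)` (the total
weight of objects of size `n` with height-parameter at most `h`) increases to
`a(n)`, the tail generating functions at the singularity decay geometrically,
`∑_n (a(n) - a_h(n)) ρⁿ ≤ C e^{-ch}`, and `a(n) = Ω(n^{-α} ρ^{-n})`, then the
height-parameter is at most `n^ε` a.a.s. with exponential rate: the
probability `(a(n) - a_{⌊n^ε⌋}(n))/a(n)` is at most `exp(-n^{c'ε})`. -/
theorem height_small_with_exponential_rate
    (ρ : ℝ) (hρ : 0 < ρ)
    (a : ℕ → ℕ → ℝ)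
    (hnn : ∀ h n, 0 ≤ a h n)
    (hmono : ∀ h n, a h n ≤ a (h + 1) n)
    (hbdd : ∀ n, BddAbove (Set.range fun h => a h n))
    (A : ℕ → ℝ) (hA : ∀ n, A n = ⨆ h : ℕ, a h n)
    (C c : ℝ) (hC : 0 < C) (hc : 0 < c)
    (hsumm : ∀ h : ℕ, Summable (fun n : ℕ => (A n - a h n) * ρ ^ n))
    (htail : ∀ h : ℕ, (∑' n : ℕ, (A n - a h n) * ρ ^ n) ≤ C * Real.exp (-c * h))
    (α c₁ : ℝ) (hα : 0 < α) (hc₁ : 0 < c₁)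
    (N : ℕ) (hlow : ∀ n : ℕ, N ≤ n → c₁ * (n : ℝ) ^ (-α) * ρ ^ (-(n : ℝ)) ≤ A n) :
    ∃ c' > (0 : ℝ), ∃ ε₀ > (0 : ℝ), ∀ ε : ℝ, 0 < ε → ε < ε₀ →
      ∃ n₀ : ℕ, ∀ n : ℕ, n₀ ≤ n →
        (A n - a ⌊(n : ℝ) ^ ε⌋₊ n) / A n ≤ Real.exp (-(n : ℝ) ^ (c' * ε)) := by
  refine ⟨1/2, by norm_num, 1, by norm_num, fun ε hε hε1 => ?_⟩
  have hε2 : (0:ℝ) < ε/2 := by linarith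
  -- the key eventual inequality over the reals
  have key : ∀ᶠ x : ℝ in atTop,
      Real.log C - Real.log c₁ + c + α * Real.log x + x ^ (ε/2) ≤ c * x ^ ε := by
    have h1 : ∀ᶠ x : ℝ in atTop, (1:ℝ) ≤ x := eventually_ge_atTop 1
    have h2 : ∀ᶠ x : ℝ in atTop, (1:ℝ) ≤ (c/2) * x ^ (ε/2) :=
      ((tendsto_rpow_atTop hε2).const_mul_atTop (by positivity : (0:ℝ) < c/2)).eventually_ge_atTop 1
    have h3 : ∀ᶠ x : ℝ in atTop, ‖Real.log x‖ ≤ (c/4/α) * ‖x ^ ε‖ :=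
      (isLittleO_log_rpow_atTop hε).bound (by positivity)
    have h4 : ∀ᶠ x : ℝ in atTop,
        Real.log C - Real.log c₁ + c ≤ (c/4) * x ^ ε :=
      ((tendsto_rpow_atTop hε).const_mul_atTop (by positivity : (0:ℝ) < c/4)).eventually_ge_atTop _
    filter_upwards [h1, h2, h3, h4] with x hx1 hx2 hx3 hx4
    have hx0 : (0:ℝ) < x := lt_of_lt_of_le one_pos hx1
    have hlog : 0 ≤ Real.log x := Real.log_nonneg hx1
    have hrp : 0 ≤ x ^ ε := Real.rpow_nonneg hx0.le ε
    rw [Real.norm_eq_abs, Real.norm_eq_abs, abs_of_nonneg hlog, abs_of_nonneg hrp] at hx3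
    have hlog' : α * Real.log x ≤ (c/4) * x ^ ε := by
      calc α * Real.log x ≤ α * ((c/4/α) * x ^ ε) := by
            exact mul_le_mul_of_nonneg_left hx3 hα.le
        _ = (c/4) * x ^ ε := by field_simp
    have hmid : x ^ (ε/2) ≤ (c/2) * x ^ ε := by
      calc x ^ (ε/2) = x ^ (ε/2) * 1 := (mul_one _).symm
        _ ≤ x ^ (ε/2) * ((c/2) * x ^ (ε/2)) := by
            exact mul_le_mul_of_nonneg_left hx2 (Real.rpow_nonneg hx0.le _)
        _ = (c/2) * (x ^ (ε/2) * x ^ (ε/2)) := by ring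
        _ = (c/2) * x ^ ε := by rw [← Real.rpow_add hx0]; norm_num
    linarith
  -- transfer to naturals
  have keyN : ∀ᶠ n : ℕ in atTop,
      Real.log C - Real.log c₁ + c + α * Real.log (n:ℝ) + (n:ℝ) ^ (ε/2) ≤ c * (n:ℝ) ^ ε :=
    tendsto_natCast_atTop_atTop.eventually key
  obtain ⟨n₀, hn₀⟩ := (keyN.and (eventually_ge_atTop (max N 1))).exists_forall_of_atTop
  refine ⟨n₀, fun n hn => ?_⟩
  obtain ⟨hkey, hnN⟩ := hn₀ n hn
  have hN : N ≤ n := le_trans (le_max_left _ _) hnN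
  have hn1 : 1 ≤ n := le_trans (le_max_right _ _) hnN
  have hx1 : (1:ℝ) ≤ (n:ℝ) := by exact_mod_cast hn1
  have hx0 : (0:ℝ) < (n:ℝ) := lt_of_lt_of_le one_pos hx1
  set x : ℝ := (n:ℝ)
  set h : ℕ := ⌊x ^ ε⌋₊ with hh
  -- A n is positive
  have hAlow := hlow n hN
  have hAn : 0 < A n := lt_of_lt_of_le (by positivity) hAlow
  -- a h n ≤ A n
  have haA : ∀ k m, a k m ≤ A m := fun k m => by
    rw [hA m]; exact le_ciSup (hbdd m) k
  -- single term bound by the tail sum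
  have hterm : (A n - a h n) * ρ ^ n ≤ C * Real.exp (-c * h) := by
    refine le_trans (Summable.le_tsum (hsumm h) n fun j _ => ?_) (htail h)
    exact mul_nonneg (sub_nonneg.mpr (haA h j)) (pow_nonneg hρ.le j)
  -- core exponential inequality
  have hcore : C * Real.exp (-c * h) ≤ Real.exp (-x ^ (ε/2)) * (c₁ * x ^ (-α)) := by
    have hfloor : x ^ ε - 1 ≤ (h:ℝ) := by
      have := Nat.lt_floor_add_one (x ^ ε)
      push_cast at this ⊢
      linarith
    have hch : c * x ^ ε - c ≤ c * h := by
      have := mul_le_mul_of_nonneg_left hfloor hc.le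
      linarith [this]
    have hlogineq : Real.log C + (-c * h) ≤
        (-x ^ (ε/2)) + (Real.log c₁ + Real.log x * (-α)) := by
      nlinarith [hkey, hch]
    calc C * Real.exp (-c * h) = Real.exp (Real.log C + (-c * h)) := by
          rw [Real.exp_add, Real.exp_log hC]
      _ ≤ Real.exp ((-x ^ (ε/2)) + (Real.log c₁ + Real.log x * (-α))) :=
          Real.exp_le_exp.mpr hlogineq
      _ = Real.exp (-x ^ (ε/2)) * (c₁ * x ^ (-α)) := by
          rw [Real.exp_add, Real.exp_add, Real.exp_log hc₁,
            Real.rpow_def_of_pos hx0 (-α)]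
  -- put things together
  have hρn : (0:ℝ) < ρ ^ n := pow_pos hρ n
  have hρx : ρ ^ (-(x:ℝ)) = (ρ ^ n)⁻¹ := by
    rw [Real.rpow_neg hρ.le, Real.rpow_natCast]
  rw [div_le_iff₀ hAn]
  have hnum : A n - a h n ≤ C * Real.exp (-c * h) * (ρ ^ n)⁻¹ := by
    rw [← div_eq_mul_inv]
    exact (le_div_iff₀ hρn).mpr hterm
  have hc'ε : (1/2) * ε = ε/2 := by ring
  rw [hc'ε]
  calc A n - a h n ≤ C * Real.exp (-c * h) * (ρ ^ n)⁻¹ := hnum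
    _ ≤ Real.exp (-x ^ (ε/2)) * (c₁ * x ^ (-α)) * (ρ ^ n)⁻¹ := by
        exact mul_le_mul_of_nonneg_right hcore (inv_nonneg.mpr hρn.le)
    _ = Real.exp (-x ^ (ε/2)) * (c₁ * x ^ (-α) * ρ ^ (-(x:ℝ))) := by
        rw [hρx]; ring
    _ ≤ Real.exp (-x ^ (ε/2)) * A n := by
        exact mul_le_mul_of_nonneg_left hAlow (Real.exp_nonneg _)
end

section
/- Let r ≥ 1 and ρ > 0. For each j ∈ {1,…,r} let F_j(z, y₁,…,y_r) = Σ_{i, m} f_j(i, m) · z^i · y₁^{m₁} ⋯ y_r^{m_r} be a power series (sum over i ∈ ℕ and m ∈ ℕ^r) with nonnegative coefficients f_j(i,m) ≥ 0 and with F_j(0, y) = 0. Define vectors τ₀ = 0 ∈ ℝ^r and τ_{h+1} = (F₁(ρ, τ_h), …, F_r(ρ, τ_h)); this sequence is nondecreasing coordinatewise. Assume τ* := sup_h τ_h is finite in every coordinate, each series F_j converges at (ρ, τ*), each entry M_{j,l} := (∂F_j/∂y_l)(ρ, τ*) = Σ_{i,m} m_l · f_j(i,m) ρ^i (τ*)^{m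 − e_l} is finite, and the spectral radius of the nonnegative r × r matrix M = (M_{j,l}) is strictly less than 1. Then there exist constants C > 0 and c > 0 such that max_{1 ≤ j ≤ r} (τ*_j − τ_{h,j}) ≤ C · e^{−c·h} for all h ≥ 0. -/
open Real ENNReal

namespace VecCrit

lemma iSup_mul_monotone {f g : ℕ → ℝ≥0∞} (hf : Monotone f) (hg : Monotone g) :
    ⨆ n, f n * g n = (⨆ n, f n) * ⨆ n, g n := by
  apply le_antisymm
  · exact iSup_le fun n => mul_le_mul' (le_iSup f n) (le_iSup g n)
  · rw [ENNReal.iSup_mul]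
    refine iSup_le fun i => ?_
    rw [ENNReal.mul_iSup]
    refine iSup_le fun j => ?_
    calc f i * g j ≤ f (max i j) * g (max i j) :=
          mul_le_mul' (hf (le_max_left i j)) (hg (le_max_right i j))
      _ ≤ ⨆ n, f n * g n := le_iSup (fun n => f n * g n) (max i j)

lemma iSup_prod_monotone {ι : Type*} (s : Finset ι) (f : ι → ℕ → ℝ≥0∞)
    (hf : ∀ i, Monotone (f i)) :
    ⨆ n, ∏ i ∈ s, f i n = ∏ i ∈ s, ⨆ n, f i n := by
  induction s using Finset.cons_induction with
  | empty => simp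
  | cons a s ha ih =>
    simp only [Finset.prod_cons]
    rw [← ih, ← iSup_mul_monotone (hf a)]
    exact fun n m hnm => Finset.prod_le_prod' fun i _ => hf i hnm

lemma iSup_pow_monotone {f : ℕ → ℝ≥0∞} (hf : Monotone f) (k : ℕ) :
    ⨆ n, f n ^ k = (⨆ n, f n) ^ k := by
  induction k with
  | zero => simp
  | succ k ih =>
    simp only [pow_succ]
    rw [← ih, ← iSup_mul_monotone (fun n m h => pow_le_pow_left' (hf h) k) hf]

lemma tsum_iSup_monotone {α : Type*} (f : α → ℕ → ℝ≥0∞) (hf : ∀ a, Monotone (f a)) :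
    ∑' a, ⨆ n, f a n = ⨆ n, ∑' a, f a n := by
  rw [ENNReal.tsum_eq_iSup_sum]
  have h1 : ∀ s : Finset α, ∑ a ∈ s, ⨆ n, f a n = ⨆ n, ∑ a ∈ s, f a n := fun s =>
    ENNReal.finsetSum_iSup_of_monotone hf
  simp_rw [h1]
  rw [iSup_comm]
  exact iSup_congr fun n => (ENNReal.tsum_eq_iSup_sum).symm

lemma tsum_sub_tsum {α : Type*} (f g : α → ℝ≥0∞) (hg : ∑' a, g a ≠ ⊤) (hgf : ∀ a, g a ≤ f a) :
    (∑' a, f a) - ∑' a, g a = ∑' a, (f a - g a) := by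
  have h : ∑' a, (f a - g a) + ∑' a, g a = ∑' a, f a := by
    rw [← ENNReal.tsum_add]
    exact tsum_congr fun a => tsub_add_cancel_of_le (hgf a)
  exact (ENNReal.eq_sub_of_add_eq hg h).symm

lemma pow_sub_pow_le_real {a b : ℝ} (hb : 0 ≤ b) (hba : b ≤ a) (n : ℕ) :
    a ^ n - b ^ n ≤ n * a ^ (n - 1) * (a - b) := by
  have ha : 0 ≤ a := hb.trans hba
  rw [← geom_sum₂_mul]
  have hsum : ∑ i ∈ Finset.range n, a ^ i * b ^ (n - 1 - i) ≤ n * a ^ (n - 1) := by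
    calc ∑ i ∈ Finset.range n, a ^ i * b ^ (n - 1 - i)
        ≤ ∑ _i ∈ Finset.range n, a ^ (n - 1) := by
          refine Finset.sum_le_sum fun i hi => ?_
          calc a ^ i * b ^ (n - 1 - i) ≤ a ^ i * a ^ (n - 1 - i) := by
                exact mul_le_mul_of_nonneg_left (pow_le_pow_left₀ hb hba _) (pow_nonneg ha i)
            _ = a ^ (i + (n - 1 - i)) := (pow_add a i _).symm
            _ = a ^ (n - 1) := by
                congr 1
                have := Finset.mem_range.mp hi
                omega
      _ = n * a ^ (n - 1) := by
          rw [Finset.sum_const, Finset.card_range, nsmul_eq_mul]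
  exact mul_le_mul_of_nonneg_right hsum (sub_nonneg.mpr hba)

lemma key_real {ι : Type*} [DecidableEq ι] (s : Finset ι) (A B : ι → ℝ) (m : ι → ℕ)
    (hB : ∀ l, 0 ≤ B l) (hBA : ∀ l, B l ≤ A l) :
    (∏ l ∈ s, A l ^ m l) - ∏ l ∈ s, B l ^ m l ≤
      ∑ l ∈ s, (m l : ℝ) * (∏ l' ∈ s, A l' ^ (m l' - if l' = l then 1 else 0)) * (A l - B l) := by
  have hA : ∀ l, 0 ≤ A l := fun l => (hB l).trans (hBA l)
  induction s using Finset.cons_induction with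
  | empty => simp
  | cons a s ha ih =>
    simp only [Finset.prod_cons, Finset.sum_cons]
    set P := ∏ l ∈ s, A l ^ m l with hP
    set Q := ∏ l ∈ s, B l ^ m l with hQ
    have hP0 : 0 ≤ P := Finset.prod_nonneg fun l _ => pow_nonneg (hA l) _
    have hQP : Q ≤ P := Finset.prod_le_prod (fun l _ => pow_nonneg (hB l) _)
      (fun l _ => pow_le_pow_left₀ (hB l) (hBA l) _)
    have hprod_a : (∏ l' ∈ s, A l' ^ (m l' - if l' = a then 1 else 0)) = P := by
      refine Finset.prod_congr rfl fun l' hl' => ?_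
      rw [if_neg (ne_of_mem_of_not_mem hl' ha), Nat.sub_zero]
    calc A a ^ m a * P - B a ^ m a * Q
        = (A a ^ m a - B a ^ m a) * P + B a ^ m a * (P - Q) := by ring
      _ ≤ ((m a : ℝ) * A a ^ (m a - 1) * (A a - B a)) * P +
            A a ^ m a * ((∑ l ∈ s, (m l : ℝ) *
              (∏ l' ∈ s, A l' ^ (m l' - if l' = l then 1 else 0)) * (A l - B l))) := by
          refine add_le_add ?_ ?_
          · exact mul_le_mul_of_nonneg_right (pow_sub_pow_le_real (hB a) (hBA a) (m a)) hP0
          · calc B a ^ m a * (P - Q) ≤ A a ^ m a * (P - Q) :=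
                  mul_le_mul_of_nonneg_right (pow_le_pow_left₀ (hB a) (hBA a) _)
                    (sub_nonneg.mpr hQP)
              _ ≤ A a ^ m a * _ := mul_le_mul_of_nonneg_left ih (pow_nonneg (hA a) _)
      _ = _ := by
          simp only [if_true]
          rw [hprod_a, Finset.mul_sum]
          congr 1
          · ring
          · refine Finset.sum_congr rfl fun l hl => ?_
            rw [if_neg (by rintro rfl; exact ha hl), Nat.sub_zero]
            ring

lemma key_ennreal {r : ℕ} (a b : Fin r → ℝ≥0∞) (m : Fin r → ℕ)
    (ha : ∀ l, a l ≠ ⊤) (hba : ∀ l, b l ≤ a l) :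
    (∏ l, a l ^ m l) - ∏ l, b l ^ m l ≤
      ∑ l, (m l : ℝ≥0∞) * (∏ l', a l' ^ (m l' - if l' = l then 1 else 0)) * (a l - b l) := by
  have hb : ∀ l, b l ≠ ⊤ := fun l => fun h => ha l (top_le_iff.mp (h ▸ hba l))
  have hXfin : (∏ l, a l ^ m l) ≠ ⊤ := by
    refine ENNReal.prod_ne_top fun l _ => ?_
    exact ENNReal.pow_ne_top (ha l)
  have hYX : (∏ l, b l ^ m l) ≤ ∏ l, a l ^ m l :=
    Finset.prod_le_prod' fun l _ => pow_le_pow_left' (hba l) _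
  have hRfin : ∀ l : Fin r,
      (m l : ℝ≥0∞) * (∏ l', a l' ^ (m l' - if l' = l then 1 else 0)) * (a l - b l) ≠ ⊤ := by
    intro l
    refine ENNReal.mul_ne_top (ENNReal.mul_ne_top (ENNReal.natCast_ne_top _) ?_) ?_
    · exact ENNReal.prod_ne_top fun l' _ => ENNReal.pow_ne_top (ha l')
    · exact fun h => ha l (top_le_iff.mp (h ▸ tsub_le_self))
  have hLfin : (∏ l, a l ^ m l) - ∏ l, b l ^ m l ≠ ⊤ :=
    fun h => hXfin (top_le_iff.mp (h ▸ tsub_le_self))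
  have hRfin' : (∑ l, (m l : ℝ≥0∞) * (∏ l', a l' ^ (m l' - if l' = l then 1 else 0)) *
      (a l - b l)) ≠ ⊤ := by
    exact (ENNReal.sum_lt_top.mpr fun l _ => lt_top_iff_ne_top.mpr (hRfin l)).ne
  rw [← ENNReal.ofReal_toReal hLfin, ← ENNReal.ofReal_toReal hRfin']
  apply ENNReal.ofReal_le_ofReal
  have hTL : ((∏ l, a l ^ m l) - ∏ l, b l ^ m l).toReal =
      (∏ l, (a l).toReal ^ m l) - ∏ l, (b l).toReal ^ m l := by
    rw [ENNReal.toReal_sub_of_le hYX hXfin, ENNReal.toReal_prod, ENNReal.toReal_prod]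
    simp [ENNReal.toReal_pow]
  have hTR : (∑ l, (m l : ℝ≥0∞) * (∏ l', a l' ^ (m l' - if l' = l then 1 else 0)) *
      (a l - b l)).toReal =
      ∑ l, (m l : ℝ) * (∏ l', (a l').toReal ^ (m l' - if l' = l then 1 else 0)) *
        ((a l).toReal - (b l).toReal) := by
    rw [ENNReal.toReal_sum fun l _ => hRfin l]
    refine Finset.sum_congr rfl fun l _ => ?_
    rw [ENNReal.toReal_mul, ENNReal.toReal_mul, ENNReal.toReal_prod,
      ENNReal.toReal_sub_of_le (hba l) (ha l), ENNReal.toReal_natCast]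
    simp [ENNReal.toReal_pow]
  rw [hTL, hTR]
  exact key_real Finset.univ (fun l => (a l).toReal) (fun l => (b l).toReal) m
    (fun l => ENNReal.toReal_nonneg) (fun l => ENNReal.toReal_mono (ha l) (hba l))

section MatrixNorm

attribute [local instance] Matrix.linftyOpNormedRing Matrix.linftyOpNormedAlgebra

lemma norm_pow_decay {r : ℕ} (hr : 1 ≤ r) (Bc : Matrix (Fin r) (Fin r) ℂ)
    (hspec : ∀ μ ∈ spectrum ℂ Bc, ‖μ‖ < 1) :
    ∃ K > (0:ℝ), ∃ c > (0:ℝ), ∀ h : ℕ, ‖Bc ^ h‖ ≤ K * Real.exp (-c * h) := by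
  haveI : Nontrivial (Matrix (Fin r) (Fin r) ℂ) := by
    refine ⟨0, 1, fun h => ?_⟩
    have := congrFun (congrFun h ⟨0, hr⟩) ⟨0, hr⟩
    simp [Matrix.one_apply] at this
  have hsr : spectralRadius ℂ Bc < 1 := by
    have h1 := spectrum.spectralRadius_lt_of_forall_lt (a := Bc) (r := 1)
      (fun z hz => by exact_mod_cast hspec z hz)
    simpa using h1
  have hg := spectrum.pow_nnnorm_pow_one_div_tendsto_nhds_spectralRadius Bc
  have hev : ∀ᶠ n : ℕ in Filter.atTop, (‖Bc ^ n‖₊ : ℝ≥0∞) ^ (1 / (n : ℝ)) < 1 :=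
    hg.eventually_lt_const hsr
  obtain ⟨N, hN⟩ := Filter.eventually_atTop.mp hev
  set n₀ := max N 1 with hn₀def
  have hn₀ : 1 ≤ n₀ := le_max_right _ _
  have hn₀pos : (0:ℝ) < n₀ := by exact_mod_cast hn₀
  have h1 : (‖Bc ^ n₀‖₊ : ℝ≥0∞) ^ (1 / (n₀ : ℝ)) < 1 := hN n₀ (le_max_left _ _)
  have h2 : ‖Bc ^ n₀‖ < 1 := by
    by_contra hcon
    push_neg at hcon
    have hc1 : (1 : ℝ≥0∞) ≤ (‖Bc ^ n₀‖₊ : ℝ≥0∞) := by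
      rw [← ENNReal.coe_one, ENNReal.coe_le_coe, ← NNReal.coe_le_coe]
      simpa using hcon
    have hc2 : (1 : ℝ≥0∞) ≤ (‖Bc ^ n₀‖₊ : ℝ≥0∞) ^ (1 / (n₀ : ℝ)) := by
      calc (1 : ℝ≥0∞) = 1 ^ (1 / (n₀ : ℝ)) := (ENNReal.one_rpow _).symm
        _ ≤ _ := ENNReal.rpow_le_rpow hc1 (by positivity)
    exact absurd h1 (not_lt.mpr hc2)
  set q : ℝ := max ‖Bc ^ n₀‖ (1/2) with hqdef
  have hq0 : 0 < q := lt_of_lt_of_le (by norm_num) (le_max_right _ _)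
  have hq1 : q < 1 := max_lt h2 (by norm_num)
  have hqle : ‖Bc ^ n₀‖ ≤ q := le_max_left _ _
  set K : ℝ := (∑ s ∈ Finset.range n₀, ‖Bc ^ s‖) + 1 with hKdef
  have hK1 : (1:ℝ) ≤ K := le_add_of_nonneg_left (Finset.sum_nonneg fun s _ => norm_nonneg _)
  have hKs : ∀ s < n₀, ‖Bc ^ s‖ ≤ K := fun s hs =>
    le_add_of_le_of_nonneg
      (Finset.single_le_sum (fun i _ => norm_nonneg (Bc ^ i)) (Finset.mem_range.mpr hs))
      zero_le_one
  have hbound : ∀ h : ℕ, ‖Bc ^ h‖ ≤ K * q ^ (h / n₀) := by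
    intro h
    have hsplit : Bc ^ h = (Bc ^ n₀) ^ (h / n₀) * Bc ^ (h % n₀) := by
      rw [← pow_mul, ← pow_add, Nat.div_add_mod]
    rcases Nat.eq_zero_or_pos (h / n₀) with hk | hk
    · rw [hsplit, hk, pow_zero, one_mul, pow_zero, mul_one]
      exact hKs _ (Nat.mod_lt _ (by omega))
    · calc ‖Bc ^ h‖ ≤ ‖(Bc ^ n₀) ^ (h / n₀)‖ * ‖Bc ^ (h % n₀)‖ := by
            rw [hsplit]; exact norm_mul_le _ _
        _ ≤ ‖Bc ^ n₀‖ ^ (h / n₀) * K := by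
            refine mul_le_mul (norm_pow_le' _ hk) (hKs _ (Nat.mod_lt _ (by omega)))
              (norm_nonneg _) (pow_nonneg (norm_nonneg _) _)
        _ ≤ q ^ (h / n₀) * K :=
            mul_le_mul_of_nonneg_right (pow_le_pow_left₀ (norm_nonneg _) hqle _)
              (by linarith)
        _ = K * q ^ (h / n₀) := mul_comm _ _
  refine ⟨K / q, by positivity, -Real.log q / n₀, ?_, ?_⟩
  · have : Real.log q < 0 := Real.log_neg hq0 hq1
    exact div_pos (neg_pos.mpr this) hn₀pos
  · intro h
    refine (hbound h).trans ?_
    have hqk : q ^ (h / n₀) = Real.exp ((h / n₀ : ℕ) * Real.log q) := by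
      rw [← Real.log_pow, Real.exp_log (pow_pos hq0 _)]
    have hlogq : Real.log q < 0 := Real.log_neg hq0 hq1
    have hkge : (h : ℝ) / (n₀ : ℝ) - 1 ≤ ((h / n₀ : ℕ) : ℝ) := by
      have h1 : h < n₀ * (h / n₀) + n₀ := by
        have := Nat.div_add_mod h n₀
        have := Nat.mod_lt h (show 0 < n₀ by omega)
        omega
      have h2 : (h : ℝ) < (n₀ : ℝ) * ((h / n₀ : ℕ) : ℝ) + n₀ := by exact_mod_cast h1
      rw [div_sub_one (ne_of_gt hn₀pos), div_le_iff₀ hn₀pos]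
      nlinarith
    have hmono : ((h / n₀ : ℕ) : ℝ) * Real.log q ≤ ((h : ℝ) / n₀ - 1) * Real.log q := by
      exact mul_le_mul_of_nonpos_right hkge (le_of_lt hlogq)
    have hexp : Real.exp (((h : ℝ) / n₀ - 1) * Real.log q) =
        (1 / q) * Real.exp (-(- Real.log q / n₀) * h) := by
      rw [sub_mul, one_mul, Real.exp_sub, Real.exp_log hq0]
      rw [div_eq_mul_inv, mul_comm (Real.exp _)]
      congr 2
      · field_simp
      · ring
    calc K * q ^ (h / n₀) ≤ K * Real.exp (((h : ℝ) / n₀ - 1) * Real.log q) := by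
          rw [hqk]
          exact mul_le_mul_of_nonneg_left (Real.exp_le_exp.mpr hmono) (by linarith)
      _ = K / q * Real.exp (-(- Real.log q / n₀) * h) := by
          rw [hexp]; ring
      _ = K / q * Real.exp (-(-Real.log q / n₀) * h) := rfl

lemma row_sum_le_norm {r : ℕ} (Bc : Matrix (Fin r) (Fin r) ℂ) (j : Fin r) :
    ∑ l, ‖Bc j l‖ ≤ ‖Bc‖ := by
  rw [Matrix.linfty_opNorm_def]
  have h1 : (∑ l, ‖Bc j l‖₊) ≤ (Finset.univ : Finset (Fin r)).sup fun i => ∑ l, ‖Bc i l‖₊ :=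
    Finset.le_sup (f := fun i => ∑ l, ‖Bc i l‖₊) (Finset.mem_univ j)
  calc ∑ l, ‖Bc j l‖ = ((∑ l, ‖Bc j l‖₊ : NNReal) : ℝ) := by push_cast; rfl
    _ ≤ _ := by exact_mod_cast h1

lemma matrix_pow_entry_decay {r : ℕ} (hr : 1 ≤ r) (N : Matrix (Fin r) (Fin r) ℝ)
    (hN0 : ∀ j l, 0 ≤ N j l)
    (hspec : ∀ μ ∈ spectrum ℂ (Matrix.of fun j l : Fin r => ((N j l : ℝ) : ℂ)), ‖μ‖ < 1) :
    ∃ K > (0:ℝ), ∃ c > (0:ℝ), ∀ h : ℕ, ∀ j : Fin r,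
      ∑ l, (N ^ h) j l ≤ K * Real.exp (-c * h) := by
  set Bc : Matrix (Fin r) (Fin r) ℂ := Matrix.of fun j l : Fin r => ((N j l : ℝ) : ℂ) with hBc
  have hφ : Bc = (Complex.ofRealHom.mapMatrix : Matrix (Fin r) (Fin r) ℝ →+* _) N := rfl
  have hpow : ∀ h : ℕ, Bc ^ h = (Complex.ofRealHom.mapMatrix : Matrix (Fin r) (Fin r) ℝ →+* _)
      (N ^ h) := fun h => by rw [hφ, ← map_pow]
  have hNpow0 : ∀ h : ℕ, ∀ j l, 0 ≤ (N ^ h) j l := by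
    intro h
    induction h with
    | zero => intro j l; rw [pow_zero]; by_cases hjl : j = l <;> simp [Matrix.one_apply, hjl]
    | succ h ih =>
      intro j l
      rw [pow_succ, Matrix.mul_apply]
      exact Finset.sum_nonneg fun k _ => mul_nonneg (ih j k) (hN0 k l)
  obtain ⟨K, hK, c, hc, hdecay⟩ := norm_pow_decay hr Bc hspec
  refine ⟨K, hK, c, hc, fun h j => ?_⟩
  have hentry : ∀ l, (N ^ h) j l = ‖(Bc ^ h) j l‖ := by
    intro l
    rw [hpow h]
    have heq : ((Complex.ofRealHom.mapMatrix :
        Matrix (Fin r) (Fin r) ℝ →+* Matrix (Fin r) (Fin r) ℂ) (N ^ h)) j l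
        = (((N ^ h) j l : ℝ) : ℂ) := rfl
    rw [heq, Complex.norm_real, Real.norm_of_nonneg (hNpow0 h j l)]
  calc ∑ l, (N ^ h) j l = ∑ l, ‖(Bc ^ h) j l‖ := Finset.sum_congr rfl fun l _ => hentry l
    _ ≤ ‖Bc ^ h‖ := row_sum_le_norm _ j
    _ ≤ K * Real.exp (-c * h) := hdecay h

end MatrixNorm

end VecCrit

open VecCrit in
/-- Vectorial analogue of the critical height lemma (Section 5 of the paper):
for a system `y = F(z, y)` of `r` power series with nonnegative coefficients
and `F_j(0, y) = 0`, the vector iterates `τ₀ = 0`, `τ_{h+1} = F(ρ, τ_h)`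
(computed coordinatewise in `[0,∞]`) converge geometrically to
`τ* = sup_h τ_h`, provided `τ*` is finite, each `F_j` converges at `(ρ, τ*)`,
the Jacobian matrix `M = (∂F_j/∂y_l)(ρ, τ*)` has finite entries, and the
spectral radius of `M` is strictly less than `1` (expressed as: every
eigenvalue `μ ∈ spectrum ℂ M` satisfies `‖μ‖ < 1`). -/
theorem vector_critical_iteration_geometric_convergence
    (r : ℕ) (hr : 1 ≤ r) (ρ : ℝ) (hρ : 0 < ρ)
    (fc : Fin r → ℕ × (Fin r → ℕ) → ℝ)
    (hfc : ∀ j p, 0 ≤ fc j p)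
    (hfc0 : ∀ j : Fin r, ∀ m : Fin r → ℕ, fc j (0, m) = 0)
    (τ : ℕ → Fin r → ℝ≥0∞) (hτ0 : ∀ j, τ 0 j = 0)
    (hτrec : ∀ h : ℕ, ∀ j : Fin r, τ (h + 1) j =
      ∑' p : ℕ × (Fin r → ℕ),
        ENNReal.ofReal (fc j p) * ENNReal.ofReal ρ ^ p.1 * ∏ l : Fin r, τ h l ^ p.2 l)
    (τs : Fin r → ℝ≥0∞) (hτs : ∀ j, τs j = ⨆ h : ℕ, τ h j)
    (hfin : ∀ j, τs j ≠ ⊤)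
    (hconv : ∀ j : Fin r,
      (∑' p : ℕ × (Fin r → ℕ),
        ENNReal.ofReal (fc j p) * ENNReal.ofReal ρ ^ p.1 * ∏ l : Fin r, τs l ^ p.2 l) ≠ ⊤)
    (M : Fin r → Fin r → ℝ≥0∞)
    (hM : ∀ j l : Fin r, M j l =
      ∑' p : ℕ × (Fin r → ℕ),
        (p.2 l : ℝ≥0∞) * ENNReal.ofReal (fc j p) * ENNReal.ofReal ρ ^ p.1 *
          ∏ l' : Fin r, τs l' ^ (p.2 l' - if l' = l then 1 else 0))
    (hMfin : ∀ j l, M j l ≠ ⊤)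
    (hspec : ∀ μ ∈ spectrum ℂ (Matrix.of fun j l : Fin r => (((M j l).toReal : ℝ) : ℂ)),
      ‖μ‖ < 1) :
    ∃ C > (0 : ℝ), ∃ c > (0 : ℝ), ∀ h : ℕ, ∀ j : Fin r,
      τs j - τ h j ≤ ENNReal.ofReal (C * Real.exp (-c * h)) := by
    classical
  -- step 1 : monotonicity
  have hstep1 : ∀ h : ℕ, ∀ j, τ h j ≤ τ (h + 1) j := by
    intro h
    induction h with
    | zero => intro j; simp [hτ0]
    | succ h ih =>
      intro j
      rw [hτrec h j, hτrec (h + 1) j]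
      refine ENNReal.tsum_le_tsum fun p => ?_
      exact mul_le_mul' le_rfl (Finset.prod_le_prod' fun l _ => pow_le_pow_left' (ih l) _)
  have hmono : ∀ j, Monotone fun h => τ h j := fun j =>
    monotone_nat_of_le_succ fun h => hstep1 h j
  have hle : ∀ h j, τ h j ≤ τs j := fun h j => (hτs j) ▸ le_iSup (fun h => τ h j) h
  have hτfin : ∀ h j, τ h j ≠ ⊤ := fun h j he => hfin j (top_le_iff.mp (he ▸ hle h j))
  -- step 2 : τs is a fixed point
  have hfix : ∀ j, τs j = ∑' p : ℕ × (Fin r → ℕ),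
      ENNReal.ofReal (fc j p) * ENNReal.ofReal ρ ^ p.1 * ∏ l, τs l ^ p.2 l := by
    intro j
    have hFmono : ∀ p : ℕ × (Fin r → ℕ), Monotone fun h =>
        ENNReal.ofReal (fc j p) * ENNReal.ofReal ρ ^ p.1 * ∏ l, τ h l ^ p.2 l := by
      intro p h1 h2 hh
      exact mul_le_mul' le_rfl (Finset.prod_le_prod' fun l _ => pow_le_pow_left' (hmono l hh) _)
    have hshift : τs j = ⨆ h, τ (h + 1) j := by
      rw [hτs j]
      apply le_antisymm
      · exact iSup_le fun h => (hstep1 h j).trans (le_iSup (fun h => τ (h + 1) j) h)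
      · exact iSup_le fun h => le_iSup (fun h => τ h j) (h + 1)
    rw [hshift]
    calc ⨆ h, τ (h + 1) j
        = ⨆ h, ∑' p : ℕ × (Fin r → ℕ), ENNReal.ofReal (fc j p) * ENNReal.ofReal ρ ^ p.1 *
            ∏ l, τ h l ^ p.2 l := iSup_congr fun h => hτrec h j
      _ = ∑' p : ℕ × (Fin r → ℕ), ⨆ h, ENNReal.ofReal (fc j p) * ENNReal.ofReal ρ ^ p.1 *
            ∏ l, τ h l ^ p.2 l := (tsum_iSup_monotone _ hFmono).symm
      _ = _ := by
          refine tsum_congr fun p => ?_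
          rw [← ENNReal.mul_iSup]
          congr 1
          rw [iSup_prod_monotone Finset.univ (fun l h => τ h l ^ p.2 l)
            (fun l h1 h2 hh => pow_le_pow_left' (hmono l hh) _)]
          refine Finset.prod_congr rfl fun l _ => ?_
          rw [iSup_pow_monotone (hmono l), ← hτs l]
  -- step 3 : one-step contraction by the Jacobian matrix
  have hΔ : ∀ h : ℕ, ∀ j, τs j - τ (h + 1) j ≤ ∑ l, M j l * (τs l - τ h l) := by
    intro h j
    rw [hfix j, hτrec h j]
    have hYX : ∀ p : ℕ × (Fin r → ℕ),
        ENNReal.ofReal (fc j p) * ENNReal.ofReal ρ ^ p.1 * ∏ l, τ h l ^ p.2 l ≤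
        ENNReal.ofReal (fc j p) * ENNReal.ofReal ρ ^ p.1 * ∏ l, τs l ^ p.2 l := fun p =>
      mul_le_mul' le_rfl (Finset.prod_le_prod' fun l _ => pow_le_pow_left' (hle h l) _)
    have hYfin : (∑' p : ℕ × (Fin r → ℕ),
        ENNReal.ofReal (fc j p) * ENNReal.ofReal ρ ^ p.1 * ∏ l, τ h l ^ p.2 l) ≠ ⊤ := by
      rw [← hτrec h j]; exact hτfin (h + 1) j
    rw [tsum_sub_tsum _ _ hYfin hYX]
    calc ∑' p : ℕ × (Fin r → ℕ),
          (ENNReal.ofReal (fc j p) * ENNReal.ofReal ρ ^ p.1 * ∏ l, τs l ^ p.2 l -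
           ENNReal.ofReal (fc j p) * ENNReal.ofReal ρ ^ p.1 * ∏ l, τ h l ^ p.2 l)
        ≤ ∑' p : ℕ × (Fin r → ℕ), ENNReal.ofReal (fc j p) * ENNReal.ofReal ρ ^ p.1 *
            ((∏ l, τs l ^ p.2 l) - ∏ l, τ h l ^ p.2 l) := by
          refine ENNReal.tsum_le_tsum fun p => ?_
          refine tsub_le_iff_right.mpr ?_
          rw [← mul_add]
          exact mul_le_mul' le_rfl le_tsub_add
      _ ≤ ∑' p : ℕ × (Fin r → ℕ), ENNReal.ofReal (fc j p) * ENNReal.ofReal ρ ^ p.1 *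
            ∑ l, (p.2 l : ℝ≥0∞) * (∏ l', τs l' ^ (p.2 l' - if l' = l then 1 else 0)) *
              (τs l - τ h l) := by
          refine ENNReal.tsum_le_tsum fun p => ?_
          exact mul_le_mul' le_rfl (key_ennreal τs (τ h) p.2 hfin (fun l => hle h l))
      _ = ∑' p : ℕ × (Fin r → ℕ), ∑ l,
            ENNReal.ofReal (fc j p) * ENNReal.ofReal ρ ^ p.1 *
              ((p.2 l : ℝ≥0∞) * (∏ l', τs l' ^ (p.2 l' - if l' = l then 1 else 0)) *
                (τs l - τ h l)) := tsum_congr fun p => Finset.mul_sum _ _ _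
      _ = ∑ l, ∑' p : ℕ × (Fin r → ℕ),
            ENNReal.ofReal (fc j p) * ENNReal.ofReal ρ ^ p.1 *
              ((p.2 l : ℝ≥0∞) * (∏ l', τs l' ^ (p.2 l' - if l' = l then 1 else 0)) *
                (τs l - τ h l)) := Summable.tsum_finsetSum fun l _ => ENNReal.summable
      _ = ∑ l, M j l * (τs l - τ h l) := by
          refine Finset.sum_congr rfl fun l _ => ?_
          rw [hM j l, ← ENNReal.tsum_mul_right]
          exact tsum_congr fun p => by ring
    -- step 4 : pass to real vectors and iterate the matrix bound
  set N : Matrix (Fin r) (Fin r) ℝ := Matrix.of fun j l => (M j l).toReal with hNdef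
  have hN0 : ∀ j l, 0 ≤ N j l := fun j l => ENNReal.toReal_nonneg
  have hNpow0 : ∀ h : ℕ, ∀ j l, 0 ≤ (N ^ h) j l := by
    intro h
    induction h with
    | zero => intro j l; rw [pow_zero]; by_cases hjl : j = l <;> simp [Matrix.one_apply, hjl]
    | succ h ih =>
      intro j l
      rw [pow_succ, Matrix.mul_apply]
      exact Finset.sum_nonneg fun k _ => mul_nonneg (ih j k) (hN0 k l)
  set d : ℕ → Fin r → ℝ := fun h j => (τs j - τ h j).toReal with hddef
  have hδfin : ∀ h j, τs j - τ h j ≠ ⊤ := fun h j he =>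
    hfin j (top_le_iff.mp (he ▸ tsub_le_self))
  have hd0 : ∀ h j, 0 ≤ d h j := fun h j => ENNReal.toReal_nonneg
  have hdstep : ∀ h j, d (h + 1) j ≤ ∑ l, N j l * d h l := by
    intro h j
    have h2 : (∑ l, M j l * (τs l - τ h l)) ≠ ⊤ := by
      refine (ENNReal.sum_lt_top.mpr fun l _ => ?_).ne
      exact lt_top_iff_ne_top.mpr (ENNReal.mul_ne_top (hMfin j l) (hδfin h l))
    have h3 := ENNReal.toReal_mono h2 (hΔ h j)
    calc d (h + 1) j ≤ (∑ l, M j l * (τs l - τ h l)).toReal := h3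
      _ = ∑ l, N j l * d h l := by
          rw [ENNReal.toReal_sum fun l _ => ENNReal.mul_ne_top (hMfin j l) (hδfin h l)]
          exact Finset.sum_congr rfl fun l _ => ENNReal.toReal_mul
  have hdpow : ∀ h : ℕ, ∀ j, d h j ≤ ((N ^ h).mulVec (d 0)) j := by
    intro h
    induction h with
    | zero => intro j; rw [pow_zero, Matrix.one_mulVec]
    | succ h ih =>
      intro j
      calc d (h + 1) j ≤ ∑ l, N j l * d h l := hdstep h j
        _ ≤ ∑ l, N j l * ((N ^ h).mulVec (d 0)) l :=
            Finset.sum_le_sum fun l _ => mul_le_mul_of_nonneg_left (ih l) (hN0 j l)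
        _ = (N.mulVec ((N ^ h).mulVec (d 0))) j := by
            simp [Matrix.mulVec, dotProduct]
        _ = ((N ^ (h + 1)).mulVec (d 0)) j := by
            rw [Matrix.mulVec_mulVec, ← pow_succ']
  obtain ⟨K, hK, c, hc, hKc⟩ := VecCrit.matrix_pow_entry_decay hr N hN0 (by exact hspec)
  set D : ℝ := ∑ l, d 0 l with hDdef
  have hD0 : 0 ≤ D := Finset.sum_nonneg fun l _ => hd0 0 l
  have hDl : ∀ l, d 0 l ≤ D := fun l =>
    Finset.single_le_sum (fun i _ => hd0 0 i) (Finset.mem_univ l)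
  have hC0 : (0:ℝ) < D * K + 1 := by nlinarith
  refine ⟨D * K + 1, hC0, c, hc, fun h j => ?_⟩
  have heq : τs j - τ h j = ENNReal.ofReal (d h j) := (ENNReal.ofReal_toReal (hδfin h j)).symm
  rw [heq]
  apply ENNReal.ofReal_le_ofReal
  calc d h j ≤ ((N ^ h).mulVec (d 0)) j := hdpow h j
    _ = ∑ l, (N ^ h) j l * d 0 l := by simp [Matrix.mulVec, dotProduct]
    _ ≤ ∑ l, (N ^ h) j l * D := Finset.sum_le_sum fun l _ =>
        mul_le_mul_of_nonneg_left (hDl l) (hNpow0 h j l)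
    _ = (∑ l, (N ^ h) j l) * D := (Finset.sum_mul _ _ _).symm
    _ ≤ (K * Real.exp (-c * h)) * D := mul_le_mul_of_nonneg_right (hKc h j) hD0
    _ ≤ (D * K + 1) * Real.exp (-c * h) := by nlinarith [Real.exp_pos (-c * (h:ℝ))]
end
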